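/- arXiv:1111.7276 — 2 statements merged into one kernel-verified Lean document; each statement's English description precedes it below -/
import Mathlib

section
/- For every C[K]-module V and every C[M]-module W (viewed as a C[P]-module via the projection P → M), there is a C-linear bijection j : Hom_{C[G]}(ind_K^G V, Ind_P^G W) → Hom_{C[M]}(ind_{K∩M}^M V_{K∩N}, W), where for each intertwiner I, j(I) is the unique C[M]-linear map sending [1, v̄] to (I([1,v]))(1) for all v ∈ V. Moreover j is natural in W: for every C[M]-linear map α : W' → W and every I' ∈ Hom_{C[G]}(ind_K^G V, Ind_P^G W'), one has j(Ind_P^G(α) ∘ I') = α ∘ j(I'), where Ind_P^G(α) is post-composition of functions with α. -/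
open scoped Classical

noncomputable section
namespace Paper

variable {C : Type} [Field C] {G : Type} [Group G]

/-- The compactly induced module `ind_K^G V`, as a `C`-submodule of `G → V`. -/
def cInd (K : Subgroup G) {V : Type} [AddCommGroup V] [Module C V]
    (ρ : Representation C ↥K V) : Submodule C (G → V) where
  carrier := {f | (∀ (k : ↥K) (x : G), f (↑k * x) = ρ k (f x)) ∧
    ∃ S : Finset G, ∀ x : G, f x ≠ 0 → ∃ s ∈ S, ∃ k ∈ K, x = k * s}
  add_mem' := by
    rintro a b ⟨ha1, Sa, ha2⟩ ⟨hb1, Sb, hb2⟩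
    refine ⟨fun k x => by simp [ha1 k x, hb1 k x], Sa ∪ Sb, fun x hx => ?_⟩
    by_cases h : a x ≠ 0
    · obtain ⟨s, hs, k, hk, h'⟩ := ha2 x h
      exact ⟨s, Finset.mem_union_left _ hs, k, hk, h'⟩
    · push_neg at h
      have hbx : b x ≠ 0 := by
        intro hb0; apply hx; simp only [Pi.add_apply, h, hb0, add_zero]
      obtain ⟨s, hs, k, hk, h'⟩ := hb2 x hbx
      exact ⟨s, Finset.mem_union_right _ hs, k, hk, h'⟩
  zero_mem' := ⟨fun k x => by simp, ∅, fun x hx => absurd rfl hx⟩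
  smul_mem' := by
    rintro c a ⟨ha1, Sa, ha2⟩
    refine ⟨fun k x => by simp [ha1 k x], Sa, fun x hx => ?_⟩
    refine ha2 x (fun h0 => hx ?_)
    simp only [Pi.smul_apply, h0, smul_zero]

/-- The (full) induced module `Ind_P^G W`, as a `C`-submodule of `G → W`. -/
def fInd (P : Subgroup G) {W : Type} [AddCommGroup W] [Module C W]
    (τ : Representation C ↥P W) : Submodule C (G → W) where
  carrier := {f | ∀ (p : ↥P) (x : G), f (↑p * x) = τ p (f x)}
  add_mem' := by intro a b ha hb p x; simp [ha p x, hb p x]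
  zero_mem' := by intro p x; simp
  smul_mem' := by intro c a ha p x; simp [ha p x]

/-- Right translation action of `G` on `ind_K^G V`. -/
def cIndRep (K : Subgroup G) {V : Type} [AddCommGroup V] [Module C V]
    (ρ : Representation C ↥K V) : Representation C G ↥(cInd K ρ) where
  toFun g :=
    { toFun := fun f => ⟨fun x => (f : G → V) (x * g), by
        refine ⟨fun k x => ?_, ?_⟩
        · show (f : G → V) ((↑k * x) * g) = ρ k ((f : G → V) (x * g))
          rw [mul_assoc]; exact f.2.1 k (x * g)
        · obtain ⟨S, hS⟩ := f.2.2
          refine ⟨S.image (· * g⁻¹), fun x hx => ?_⟩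
          obtain ⟨s, hs, k, hk, h'⟩ := hS (x * g) hx
          refine ⟨s * g⁻¹, Finset.mem_image_of_mem _ hs, k, hk, ?_⟩
          rw [← mul_assoc, ← h', mul_assoc, mul_inv_cancel, mul_one]⟩
      map_add' := fun a b => rfl
      map_smul' := fun c a => rfl }
  map_one' := by ext f x; simp
  map_mul' := fun a b => by ext f x; simp [mul_assoc]

/-- Right translation action of `G` on `Ind_P^G W`. -/
def fIndRep (P : Subgroup G) {W : Type} [AddCommGroup W] [Module C W]
    (τ : Representation C ↥P W) : Representation C G ↥(fInd P τ) where
  toFun g :=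
    { toFun := fun f => ⟨fun x => (f : G → W) (x * g), by
        intro p x
        show (f : G → W) ((↑p * x) * g) = τ p ((f : G → W) (x * g))
        rw [mul_assoc]; exact f.2 p (x * g)⟩
      map_add' := fun a b => rfl
      map_smul' := fun c a => rfl }
  map_one' := by ext f x; simp
  map_mul' := fun a b => by ext f x; simp [mul_assoc]

/-- Equivariant `C`-linear maps between two representations of a monoid `Γ`. -/
def equivHom {Γ : Type} [Monoid Γ] {X Y : Type} [AddCommGroup X] [Module C X]
    [AddCommGroup Y] [Module C Y] (σ : Representation C Γ X) (τ : Representation C Γ Y) :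
    Submodule C (X →ₗ[C] Y) where
  carrier := {φ | ∀ γ : Γ, φ ∘ₗ σ γ = τ γ ∘ₗ φ}
  add_mem' := by
    intro a b ha hb γ; ext x
    have h1 := LinearMap.congr_fun (ha γ) x
    have h2 := LinearMap.congr_fun (hb γ) x
    simp only [LinearMap.comp_apply] at h1 h2 ⊢
    simp [h1, h2]
  zero_mem' := by intro γ; ext x; simp
  smul_mem' := by
    intro c a ha γ; ext x
    have h1 := LinearMap.congr_fun (ha γ) x
    simp only [LinearMap.comp_apply] at h1 ⊢
    simp [h1]

/-- The element `[1,v]` of `ind_K^G V` : the function supported on `K` with value `v` at `1`. -/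
def unitFn (K : Subgroup G) {V : Type} [AddCommGroup V] [Module C V]
    (ρ : Representation C ↥K V) (v : V) : G → V :=
  fun g => if h : g ∈ K then ρ ⟨g, h⟩ v else 0

lemma unitFn_mem (K : Subgroup G) {V : Type} [AddCommGroup V] [Module C V]
    (ρ : Representation C ↥K V) (v : V) : unitFn K ρ v ∈ cInd K ρ := by
  constructor
  · intro k x
    by_cases hx : x ∈ K
    · have hkx : (↑k * x) ∈ K := mul_mem k.2 hx
      simp only [unitFn, dif_pos hx, dif_pos hkx]
      have : (⟨↑k * x, hkx⟩ : ↥K) = k * ⟨x, hx⟩ := rfl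
      rw [this, map_mul]; rfl
    · have hkx : (↑k * x) ∉ K := by
        intro h
        exact hx (by simpa using mul_mem (inv_mem k.2) h)
      simp [unitFn, dif_neg hx, dif_neg hkx]
  · refine ⟨{1}, fun x hx => ⟨1, Finset.mem_singleton_self 1, x, ?_, (mul_one x).symm⟩⟩
    by_contra hxK
    exact hx (by simp [unitFn, dif_neg hxK])

/-- `[1,v]` as an element of the submodule. -/
def unitElt (K : Subgroup G) {V : Type} [AddCommGroup V] [Module C V]
    (ρ : Representation C ↥K V) (v : V) : ↥(cInd K ρ) :=
  ⟨unitFn K ρ v, unitFn_mem K ρ v⟩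

/-- The subspace of `V` spanned by the elements `ρ(n)v - v`, `n ∈ K ⊓ N`. -/
def coinvKer (K N : Subgroup G) {V : Type} [AddCommGroup V] [Module C V]
    (ρ : Representation C ↥K V) : Submodule C V :=
  Submodule.span C {x | ∃ (n : G) (hn : n ∈ K ⊓ N) (v : V), x = ρ ⟨n, hn.1⟩ v - v}

/-- The representation of `K ⊓ M` on the coinvariants `V_{K ⊓ N}`. -/
def coinvRep (K M N : Subgroup G) {V : Type} [AddCommGroup V] [Module C V]
    (ρ : Representation C ↥K V)
    (hnorm : ∀ (m : ↥(K ⊓ M)) (n : G), n ∈ K ⊓ N → ↑m * n * (↑m)⁻¹ ∈ K ⊓ N) :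
    Representation C ↥(K ⊓ M) (V ⧸ coinvKer K N ρ) where
  toFun m := Submodule.mapQ _ _ (ρ ⟨↑m, m.2.1⟩) (by
    rw [coinvKer, Submodule.span_le]
    rintro x ⟨n, hn, v, rfl⟩
    refine Submodule.mem_comap.mpr ?_
    have key : ρ ⟨↑m, m.2.1⟩ (ρ ⟨n, hn.1⟩ v - v)
        = ρ ⟨↑m * n * (↑m)⁻¹, (hnorm m n hn).1⟩ (ρ ⟨↑m, m.2.1⟩ v) - ρ ⟨↑m, m.2.1⟩ v := by
      rw [map_sub]
      congr 1
      have h2 : (⟨↑m * n * (↑m)⁻¹, (hnorm m n hn).1⟩ : ↥K) * ⟨↑m, m.2.1⟩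
          = ⟨↑m, m.2.1⟩ * ⟨n, hn.1⟩ := by
        ext; simp [mul_assoc]
      calc ρ ⟨↑m, m.2.1⟩ (ρ ⟨n, hn.1⟩ v) = (ρ (⟨↑m, m.2.1⟩ * ⟨n, hn.1⟩)) v := by
            rw [map_mul]; rfl
        _ = ρ (⟨↑m * n * (↑m)⁻¹, (hnorm m n hn).1⟩ * ⟨↑m, m.2.1⟩) v := by rw [h2]
        _ = _ := by rw [map_mul]; rfl
    rw [key]
    exact Submodule.subset_span ⟨↑m * n * (↑m)⁻¹, hnorm m n hn, ρ ⟨↑m, m.2.1⟩ v, rfl⟩)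
  map_one' := by
    refine LinearMap.ext fun x => ?_
    obtain ⟨v, rfl⟩ := Submodule.Quotient.mk_surjective _ x
    rw [Submodule.mapQ_apply]
    have h1 : (⟨((1 : ↥(K ⊓ M)) : G), (1 : ↥(K ⊓ M)).2.1⟩ : ↥K) = 1 := by ext; rfl
    rw [h1, map_one]
    rfl
  map_mul' := by
    intro a b
    refine LinearMap.ext fun x => ?_
    obtain ⟨v, rfl⟩ := Submodule.Quotient.mk_surjective _ x
    have h1 : (⟨((a * b : ↥(K ⊓ M)) : G), (a * b).2.1⟩ : ↥K)
        = ⟨↑a, a.2.1⟩ * ⟨↑b, b.2.1⟩ := by ext; rfl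
    simp only [Submodule.mapQ_apply, Module.End.mul_apply, h1, map_mul]

/-- The inclusion of `(K ⊓ M).subgroupOf M` into `K ⊓ M`. -/
def toKM (K M : Subgroup G) : ↥((K ⊓ M).subgroupOf M) →* ↥(K ⊓ M) where
  toFun x := ⟨↑↑x, x.2⟩
  map_one' := rfl
  map_mul' _ _ := rfl

def rhoBar (K M N : Subgroup G) {V : Type} [AddCommGroup V] [Module C V]
    (ρ : Representation C ↥K V)
    (hnorm : ∀ (m : ↥(K ⊓ M)) (n : G), n ∈ K ⊓ N → ↑m * n * (↑m)⁻¹ ∈ K ⊓ N) :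
    Representation C ↥((K ⊓ M).subgroupOf M) (V ⧸ coinvKer K N ρ) :=
  (coinvRep K M N ρ hnorm).comp (toKM K M)

def cIndBar (K M N : Subgroup G) {V : Type} [AddCommGroup V] [Module C V]
    (ρ : Representation C ↥K V)
    (hnorm : ∀ (m : ↥(K ⊓ M)) (n : G), n ∈ K ⊓ N → ↑m * n * (↑m)⁻¹ ∈ K ⊓ N) :
    Submodule C (↥M → V ⧸ coinvKer K N ρ) :=
  cInd ((K ⊓ M).subgroupOf M) (rhoBar K M N ρ hnorm)

def tauM {P M : Subgroup G} (hMP : M ≤ P) {W : Type} [AddCommGroup W] [Module C W]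
    (τP : Representation C ↥P W) : Representation C ↥M W :=
  τP.comp (Subgroup.inclusion hMP)


/-- The space `Hom_{C[G]}(ind_K^G V, Ind_P^G W)` of intertwiners. -/
def HomG (K P : Subgroup G) {V W : Type} [AddCommGroup V] [Module C V]
    [AddCommGroup W] [Module C W]
    (ρ : Representation C ↥K V) (τP : Representation C ↥P W) :
    Submodule C (↥(cInd K ρ) →ₗ[C] ↥(fInd P τP)) :=
  equivHom (cIndRep K ρ) (fIndRep P τP)

/-- The space `Hom_{C[M]}(ind_{K∩M}^M V_{K∩N}, W)`. -/
def HomBar (K P M N : Subgroup G) (hMP : M ≤ P) {V W : Type} [AddCommGroup V] [Module C V]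
    [AddCommGroup W] [Module C W] (ρ : Representation C ↥K V)
    (hnorm : ∀ (m : ↥(K ⊓ M)) (n' : G), n' ∈ K ⊓ N → ↑m * n' * (↑m)⁻¹ ∈ K ⊓ N)
    (τP : Representation C ↥P W) :
    Submodule C (↥(cIndBar K M N ρ hnorm) →ₗ[C] W) :=
  equivHom (cIndRep ((K ⊓ M).subgroupOf M) (rhoBar K M N ρ hnorm)) (tauM hMP τP)

/-- The element `[1, v̄]` of `ind_{K∩M}^M V_{K∩N}`. -/
def unitBar (K M N : Subgroup G) {V : Type} [AddCommGroup V] [Module C V]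
    (ρ : Representation C ↥K V)
    (hnorm : ∀ (m : ↥(K ⊓ M)) (n' : G), n' ∈ K ⊓ N → ↑m * n' * (↑m)⁻¹ ∈ K ⊓ N)
    (v : V) : ↥(cIndBar K M N ρ hnorm) :=
  unitElt ((K ⊓ M).subgroupOf M) (rhoBar K M N ρ hnorm) (Submodule.Quotient.mk v)

/-- The characterizing property of `j` : `j(I) = u` iff `u([1,v̄]) = (I [1,v])(1)`
for all `v ∈ V`. -/
def charJ (K P M N : Subgroup G) {V W : Type} [AddCommGroup V] [Module C V]
    [AddCommGroup W] [Module C W] (ρ : Representation C ↥K V)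
    (hnorm : ∀ (m : ↥(K ⊓ M)) (n' : G), n' ∈ K ⊓ N → ↑m * n' * (↑m)⁻¹ ∈ K ⊓ N)
    (τP : Representation C ↥P W)
    (I : ↥(cInd K ρ) →ₗ[C] ↥(fInd P τP)) (u : ↥(cIndBar K M N ρ hnorm) →ₗ[C] W) : Prop :=
  ∀ v : V, u (unitBar K M N ρ hnorm v) = (↑(I (unitElt K ρ v)) : G → W) 1

/-!
STATEMENT 1.  `C` a field, `G` a group, `K, P` subgroups with `G = K·P`, `P = M ⋉ N` an
internal semidirect product, `K ∩ P = (K∩M)·(K∩N)`.  `C[M]`-modules `W` are regarded as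
`C[P]`-modules through the projection `P → M` (encoded by: a representation `τP` of `P`
which is trivial on `N`; its restriction `tauM hMP τP` to `M` is the `M`-module structure).

For every `C[K]`-module `V` and every such `W`, there is a `C`-linear bijection
`j : Hom_{C[G]}(ind_K^G V, Ind_P^G W) → Hom_{C[M]}(ind_{K∩M}^M V_{K∩N}, W)` such that, for
each intertwiner `I`, `j(I)` is the unique `C[M]`-linear map sending `[1, v̄]` to
`(I [1,v])(1)` for all `v ∈ V` (predicate `charJ`).  Moreover `j` is natural in `W` :
`j(Ind_P^G(α) ∘ I') = α ∘ j(I')` for `α : W' → W` `M`-linear, which by the uniqueness is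
expressed through `charJ` (noting `(Ind_P^G(α) ∘ I')([1,v])(1) = α((I'[1,v])(1))`).
-/
/-! ### Generic lemmas about compactly induced modules -/

section Generic

variable {Γ : Type} [Group Γ] (H : Subgroup Γ) {X : Type} [AddCommGroup X] [Module C X]
  (σ : Representation C ↥H X)

lemma unitFn_apply_mem (v : X) {g : Γ} (hg : g ∈ H) :
    unitFn H σ v g = σ ⟨g, hg⟩ v := dif_pos hg

lemma unitFn_apply_not_mem (v : X) {g : Γ} (hg : g ∉ H) :
    unitFn H σ v g = 0 := dif_neg hg

lemma unitElt_coe (v : X) : ((unitElt H σ v : ↥(cInd H σ)) : Γ → X) = unitFn H σ v := rfl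

lemma cIndRep_coe (g : Γ) (f : ↥(cInd H σ)) (x : Γ) :
    ((cIndRep H σ g f : ↥(cInd H σ)) : Γ → X) x = (f : Γ → X) (x * g) := rfl

lemma cInd_equivariance (f : ↥(cInd H σ)) (k : ↥H) (x : Γ) :
    (f : Γ → X) (↑k * x) = σ k ((f : Γ → X) x) := f.2.1 k x

lemma unitElt_add (v w : X) : unitElt H σ (v + w) = unitElt H σ v + unitElt H σ w := by
  apply Subtype.ext; funext x
  show unitFn H σ (v + w) x = unitFn H σ v x + unitFn H σ w x
  by_cases h : x ∈ H <;> simp [unitFn, h]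

lemma unitElt_smul (c : C) (v : X) : unitElt H σ (c • v) = c • unitElt H σ v := by
  apply Subtype.ext; funext x
  show unitFn H σ (c • v) x = c • unitFn H σ v x
  by_cases h : x ∈ H <;> simp [unitFn, h]

lemma cIndRep_unitElt (h : ↥H) (v : X) :
    cIndRep H σ ↑h (unitElt H σ v) = unitElt H σ (σ h v) := by
  apply Subtype.ext; funext x
  show unitFn H σ v (x * ↑h) = unitFn H σ (σ h v) x
  by_cases hx : x ∈ H
  · have hxh : x * ↑h ∈ H := mul_mem hx h.2
    rw [unitFn_apply_mem _ _ _ hxh, unitFn_apply_mem _ _ _ hx]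
    have hh : (⟨x * ↑h, hxh⟩ : ↥H) = ⟨x, hx⟩ * h := rfl
    rw [hh, map_mul]; rfl
  · have hxh : x * ↑h ∉ H := fun hc => hx (by simpa using mul_mem hc (inv_mem h.2))
    rw [unitFn_apply_not_mem _ _ _ hxh, unitFn_apply_not_mem _ _ _ hx]

/-- The set of translates of unit elements. -/
def unitSpanSet : Set ↥(cInd H σ) :=
  {x | ∃ (g : Γ) (v : X), x = cIndRep H σ g (unitElt H σ v)}

lemma mem_span_units_aux (S : Finset Γ) :
    ∀ f : ↥(cInd H σ), (∀ x : Γ, (f : Γ → X) x ≠ 0 → ∃ s ∈ S, ∃ k ∈ H, x = k * s) →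
      f ∈ Submodule.span C (unitSpanSet H σ) := by
  classical
  induction S using Finset.induction_on with
  | empty =>
    intro f hf
    have hf0 : f = 0 := by
      apply Subtype.ext; funext x
      by_contra hx
      obtain ⟨s, hs, -⟩ := hf x hx
      exact absurd hs (Finset.notMem_empty s)
    rw [hf0]; exact Submodule.zero_mem _
  | @insert a S ha ih =>
    intro f hf
    set t : ↥(cInd H σ) := cIndRep H σ a⁻¹ (unitElt H σ ((f : Γ → X) a)) with ht
    have htmem : t ∈ Submodule.span C (unitSpanSet H σ) :=
      Submodule.subset_span ⟨a⁻¹, (f : Γ → X) a, rfl⟩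
    have hcoe : ∀ x : Γ, ((f - t : ↥(cInd H σ)) : Γ → X) x
        = (f : Γ → X) x - unitFn H σ ((f : Γ → X) a) (x * a⁻¹) := fun x => rfl
    have hzero : ∀ x : Γ, x * a⁻¹ ∈ H → ((f - t : ↥(cInd H σ)) : Γ → X) x = 0 := by
      intro x hx
      have hxa : x = ↑(⟨x * a⁻¹, hx⟩ : ↥H) * a := by
        simp [inv_mul_cancel_right]
      rw [hcoe, unitFn_apply_mem _ _ _ hx]
      rw [show (f : Γ → X) x = σ ⟨x * a⁻¹, hx⟩ ((f : Γ → X) a) by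
        conv_lhs => rw [hxa]
        exact f.2.1 _ a]
      exact sub_self _
    have hsupp : ∀ x : Γ, ((f - t : ↥(cInd H σ)) : Γ → X) x ≠ 0 →
        ∃ s ∈ S, ∃ k ∈ H, x = k * s := by
      intro x hx
      have hxa : x * a⁻¹ ∉ H := fun hc => hx (hzero x hc)
      have hfx : (f : Γ → X) x ≠ 0 := by
        intro h0
        apply hx
        rw [hcoe, h0, unitFn_apply_not_mem _ _ _ hxa, sub_zero]
      obtain ⟨s, hs, k, hk, hks⟩ := hf x hfx
      rcases Finset.mem_insert.mp hs with rfl | hs'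
      · exact absurd (by rw [hks]; simpa using hk) hxa
      · exact ⟨s, hs', k, hk, hks⟩
    have : f = (f - t) + t := by rw [sub_add_cancel]
    rw [this]
    exact Submodule.add_mem _ (ih (f - t) hsupp) htmem

lemma mem_span_units (f : ↥(cInd H σ)) : f ∈ Submodule.span C (unitSpanSet H σ) := by
  obtain ⟨S, hS⟩ := f.2.2
  exact mem_span_units_aux H σ S f hS

variable {W0 : Type} [AddCommGroup W0] [Module C W0] (τ₀ : Representation C Γ W0)

/-- Two equivariant maps out of a compactly induced module agreeing on the unit elements
are equal. -/
lemma homEq_of_unit {u u' : ↥(cInd H σ) →ₗ[C] W0}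
    (hu : u ∈ equivHom (cIndRep H σ) τ₀) (hu' : u' ∈ equivHom (cIndRep H σ) τ₀)
    (h : ∀ v : X, u (unitElt H σ v) = u' (unitElt H σ v)) : u = u' := by
  have hker : ∀ f : ↥(cInd H σ), (u - u') f = 0 := by
    intro f
    have hle : Submodule.span C (unitSpanSet H σ) ≤ LinearMap.ker (u - u') := by
      rw [Submodule.span_le]
      rintro x ⟨g, v, rfl⟩
      have h1 := LinearMap.congr_fun (hu g) (unitElt H σ v)
      have h2 := LinearMap.congr_fun (hu' g) (unitElt H σ v)
      simp only [LinearMap.comp_apply] at h1 h2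
      simp only [SetLike.mem_coe, LinearMap.mem_ker, LinearMap.sub_apply, h1, h2, h v,
        sub_self]
    exact hle (mem_span_units H σ f)
  ext f
  have := hker f
  rwa [LinearMap.sub_apply, sub_eq_zero] at this

end Generic
section Frobenius

variable {Γ : Type} [Group Γ] (H : Subgroup Γ) {X : Type} [AddCommGroup X] [Module C X]
  (σ : Representation C ↥H X)
  {W0 : Type} [AddCommGroup W0] [Module C W0] (τ₀ : Representation C Γ W0)
  (lam : X →ₗ[C] W0)

variable (hlam : ∀ (h : ↥H) (x : X), lam (σ h x) = τ₀ ↑h (lam x))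

/-- Right multiplication as a bijection of the right coset space. -/
def rcosetMul (g : Γ) :
    Quotient (QuotientGroup.rightRel H) ≃ Quotient (QuotientGroup.rightRel H) where
  toFun := Quotient.map (fun m => m * g) (by
    intro a b hab
    refine QuotientGroup.rightRel_apply.mpr ?_
    have := QuotientGroup.rightRel_apply.mp hab
    simpa [mul_assoc] using this)
  invFun := Quotient.map (fun m => m * g⁻¹) (by
    intro a b hab
    refine QuotientGroup.rightRel_apply.mpr ?_
    have := QuotientGroup.rightRel_apply.mp hab
    simpa [mul_assoc] using this)
  left_inv := by
    intro q; obtain ⟨m, rfl⟩ := Quotient.exists_rep q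
    show Quotient.mk _ (m * g * g⁻¹) = Quotient.mk _ m
    rw [mul_assoc, mul_inv_cancel, mul_one]
  right_inv := by
    intro q; obtain ⟨m, rfl⟩ := Quotient.exists_rep q
    show Quotient.mk _ (m * g⁻¹ * g) = Quotient.mk _ m
    rw [mul_assoc, inv_mul_cancel, mul_one]

lemma rcosetMul_mk (g m : Γ) :
    rcosetMul H g (Quotient.mk _ m) = Quotient.mk _ (m * g) := rfl


include hlam in
/-- The function on the right coset space `H\Γ` underlying the Frobenius map. -/
def uFun (f : ↥(cInd H σ)) : Quotient (QuotientGroup.rightRel H) → W0 :=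
  Quotient.lift (fun m => τ₀ m⁻¹ (lam ((f : Γ → X) m))) (by
    intro a b hab
    have hk : b * a⁻¹ ∈ H := QuotientGroup.rightRel_apply.mp hab
    have hb : b = ↑(⟨b * a⁻¹, hk⟩ : ↥H) * a := by simp
    have h1 : (f : Γ → X) b = σ ⟨b * a⁻¹, hk⟩ ((f : Γ → X) a) := by
      conv_lhs => rw [hb]
      exact f.2.1 _ a
    rw [h1, hlam]
    show τ₀ a⁻¹ (lam ((f : Γ → X) a)) = (τ₀ b⁻¹ * τ₀ (b * a⁻¹)) (lam ((f : Γ → X) a))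
    rw [← map_mul]
    congr 2
    group)

lemma uFun_mk (f : ↥(cInd H σ)) (m : Γ) :
    uFun H σ τ₀ lam hlam f (Quotient.mk _ m) = τ₀ m⁻¹ (lam ((f : Γ → X) m)) := rfl

lemma uFun_support_finite (f : ↥(cInd H σ)) :
    (Function.support (uFun H σ τ₀ lam hlam f)).Finite := by
  obtain ⟨S, hS⟩ := f.2.2
  apply Set.Finite.subset (Set.Finite.image (fun s => Quotient.mk (QuotientGroup.rightRel H) s)
    S.finite_toSet)
  intro q hq
  obtain ⟨m, rfl⟩ := Quotient.exists_rep q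
  have hm : (f : Γ → X) m ≠ 0 := by
    intro h0
    apply hq
    show uFun H σ τ₀ lam hlam f (Quotient.mk _ m) = 0
    rw [uFun_mk, h0, map_zero, map_zero]
  obtain ⟨s, hs, k, hk, rfl⟩ := hS m hm
  refine ⟨s, hs, ?_⟩
  apply Quotient.sound
  refine QuotientGroup.rightRel_apply.mpr ?_
  simpa using hk

include hlam in
/-- The Frobenius reciprocity map: `lam`-weighted sum over right cosets. -/
def uHat : ↥(cInd H σ) →ₗ[C] W0 where
  toFun f := ∑ᶠ q, uFun H σ τ₀ lam hlam f q
  map_add' f g := by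
    have h1 : uFun H σ τ₀ lam hlam (f + g)
        = uFun H σ τ₀ lam hlam f + uFun H σ τ₀ lam hlam g := by
      funext q
      obtain ⟨m, rfl⟩ := Quotient.exists_rep q
      show τ₀ m⁻¹ (lam (((f + g : ↥(cInd H σ)) : Γ → X) m)) = _
      have : ((f + g : ↥(cInd H σ)) : Γ → X) m = (f : Γ → X) m + (g : Γ → X) m := rfl
      rw [this, map_add, map_add]
      rfl
    rw [h1]
    exact finsum_add_distrib (uFun_support_finite H σ τ₀ lam hlam f)
      (uFun_support_finite H σ τ₀ lam hlam g)
  map_smul' c f := by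
    have h1 : uFun H σ τ₀ lam hlam (c • f) = c • uFun H σ τ₀ lam hlam f := by
      funext q
      obtain ⟨m, rfl⟩ := Quotient.exists_rep q
      show τ₀ m⁻¹ (lam (((c • f : ↥(cInd H σ)) : Γ → X) m)) = _
      have : ((c • f : ↥(cInd H σ)) : Γ → X) m = c • (f : Γ → X) m := rfl
      rw [this, map_smul, map_smul]
      rfl
    rw [h1]
    simp only [RingHom.id_apply]
    exact (smul_finsum' c (uFun_support_finite H σ τ₀ lam hlam f)).symm


include hlam

lemma uHat_equivariant : uHat H σ τ₀ lam hlam ∈ equivHom (cIndRep H σ) τ₀ := by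
  intro g
  ext f
  simp only [LinearMap.comp_apply]
  show ∑ᶠ q, uFun H σ τ₀ lam hlam (cIndRep H σ g f) q = τ₀ g (∑ᶠ q, uFun H σ τ₀ lam hlam f q)
  have key : ∀ q, uFun H σ τ₀ lam hlam (cIndRep H σ g f) q
      = τ₀ g (uFun H σ τ₀ lam hlam f (rcosetMul H g q)) := by
    intro q; obtain ⟨m, rfl⟩ := Quotient.exists_rep q
    rw [uFun_mk, rcosetMul_mk, uFun_mk]
    have h1 : ((cIndRep H σ g f : ↥(cInd H σ)) : Γ → X) m = (f : Γ → X) (m * g) := rfl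
    rw [h1]
    show _ = (τ₀ g * τ₀ (m * g)⁻¹) (lam ((f : Γ → X) (m * g)))
    rw [← map_mul]
    congr 2
    group
  have hsupp : (Function.support fun q =>
      uFun H σ τ₀ lam hlam f (rcosetMul H g q)).Finite := by
    have : (Function.support fun q => uFun H σ τ₀ lam hlam f (rcosetMul H g q))
        = (rcosetMul H g) ⁻¹' (Function.support (uFun H σ τ₀ lam hlam f)) := rfl
    rw [this]
    exact Set.Finite.preimage ((rcosetMul H g).injective.injOn)
      (uFun_support_finite H σ τ₀ lam hlam f)
  calc ∑ᶠ q, uFun H σ τ₀ lam hlam (cIndRep H σ g f) q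
      = ∑ᶠ q, τ₀ g (uFun H σ τ₀ lam hlam f (rcosetMul H g q)) := by
        exact finsum_congr key
    _ = τ₀ g (∑ᶠ q, uFun H σ τ₀ lam hlam f (rcosetMul H g q)) := by
        exact ((τ₀ g).toAddMonoidHom.map_finsum hsupp).symm
    _ = τ₀ g (∑ᶠ q, uFun H σ τ₀ lam hlam f q) := by
        rw [finsum_comp_equiv (rcosetMul H g)]

lemma uHat_unitElt (v : X) : uHat H σ τ₀ lam hlam (unitElt H σ v) = lam v := by
  show ∑ᶠ q, uFun H σ τ₀ lam hlam (unitElt H σ v) q = lam v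
  have h1 : ∀ q, q ≠ Quotient.mk (QuotientGroup.rightRel H) 1 →
      uFun H σ τ₀ lam hlam (unitElt H σ v) q = 0 := by
    intro q hq
    obtain ⟨m, rfl⟩ := Quotient.exists_rep q
    rw [uFun_mk]
    by_cases hm : m ∈ H
    · exact absurd (Quotient.sound (QuotientGroup.rightRel_apply.mpr (by simpa using hm))) hq
    · rw [unitElt_coe, unitFn_apply_not_mem _ _ _ hm, map_zero, map_zero]
  rw [finsum_eq_single _ _ h1, uFun_mk, unitElt_coe, unitFn_apply_mem _ _ _ (one_mem H)]
  have : (⟨(1 : Γ), one_mem H⟩ : ↥H) = 1 := rfl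
  rw [this, map_one]
  simp

omit hlam in
lemma uHat_congr {lam1 lam2 : X →ₗ[C] W0}
    (h1 : ∀ (h : ↥H) (x : X), lam1 (σ h x) = τ₀ ↑h (lam1 x))
    (h2 : ∀ (h : ↥H) (x : X), lam2 (σ h x) = τ₀ ↑h (lam2 x)) (he : lam1 = lam2) :
    uHat H σ τ₀ lam1 h1 = uHat H σ τ₀ lam2 h2 := by
  subst he; rfl

omit hlam in
lemma uHat_add {lam1 lam2 : X →ₗ[C] W0}
    (h1 : ∀ (h : ↥H) (x : X), lam1 (σ h x) = τ₀ ↑h (lam1 x))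
    (h2 : ∀ (h : ↥H) (x : X), lam2 (σ h x) = τ₀ ↑h (lam2 x))
    (h12 : ∀ (h : ↥H) (x : X), (lam1 + lam2) (σ h x) = τ₀ ↑h ((lam1 + lam2) x)) :
    uHat H σ τ₀ (lam1 + lam2) h12 = uHat H σ τ₀ lam1 h1 + uHat H σ τ₀ lam2 h2 := by
  ext f
  simp only [LinearMap.add_apply]
  show ∑ᶠ q, uFun H σ τ₀ (lam1 + lam2) h12 f q
      = (∑ᶠ q, uFun H σ τ₀ lam1 h1 f q) + ∑ᶠ q, uFun H σ τ₀ lam2 h2 f q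
  have hone : uFun H σ τ₀ (lam1 + lam2) h12 f
      = uFun H σ τ₀ lam1 h1 f + uFun H σ τ₀ lam2 h2 f := by
    funext q; obtain ⟨m, rfl⟩ := Quotient.exists_rep q
    show τ₀ m⁻¹ ((lam1 + lam2) ((f : Γ → X) m)) = _
    rw [LinearMap.add_apply, map_add]
    rfl
  rw [hone]
  exact finsum_add_distrib (uFun_support_finite H σ τ₀ lam1 h1 f)
    (uFun_support_finite H σ τ₀ lam2 h2 f)

omit hlam in
lemma uHat_smul (c : C) {lam1 : X →ₗ[C] W0}
    (h1 : ∀ (h : ↥H) (x : X), lam1 (σ h x) = τ₀ ↑h (lam1 x))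
    (hc : ∀ (h : ↥H) (x : X), (c • lam1) (σ h x) = τ₀ ↑h ((c • lam1) x)) :
    uHat H σ τ₀ (c • lam1) hc = c • uHat H σ τ₀ lam1 h1 := by
  ext f
  simp only [LinearMap.smul_apply]
  show ∑ᶠ q, uFun H σ τ₀ (c • lam1) hc f q = c • ∑ᶠ q, uFun H σ τ₀ lam1 h1 f q
  have hone : uFun H σ τ₀ (c • lam1) hc f = c • uFun H σ τ₀ lam1 h1 f := by
    funext q; obtain ⟨m, rfl⟩ := Quotient.exists_rep q
    show τ₀ m⁻¹ ((c • lam1) ((f : Γ → X) m)) = _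
    rw [LinearMap.smul_apply, map_smul]
    rfl
  rw [hone]
  exact (smul_finsum' c (uFun_support_finite H σ τ₀ lam1 h1 f)).symm

end Frobenius
section Specific

variable {V : Type} [AddCommGroup V] [Module C V]
  (K P M N : Subgroup G)
  (hMP : M ≤ P) (hNP : N ≤ P)
  (hNnormal : ∀ p ∈ P, ∀ n' ∈ N, p * n' * p⁻¹ ∈ N)
  (hMN : M ⊓ N = ⊥)
  (hPprod : ∀ p ∈ P, ∃ m ∈ M, ∃ n' ∈ N, p = m * n')
  (hG : ∀ g : G, ∃ k ∈ K, ∃ p ∈ P, g = k * p)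
  (hKP : ∀ x ∈ K ⊓ P, ∃ m ∈ K ⊓ M, ∃ n' ∈ K ⊓ N, x = m * n')
  (hnorm : ∀ (m : ↥(K ⊓ M)) (n' : G), n' ∈ K ⊓ N → ↑m * n' * (↑m)⁻¹ ∈ K ⊓ N)
  (ρ : Representation C ↥K V)
  {W : Type} [AddCommGroup W] [Module C W] (τP : Representation C ↥P W)
  (hτ : ∀ x : ↥P, (x : G) ∈ N → τP x = 1)

/-- `v ↦ (I [1,v])(1)` as a linear map. -/
def ellOf (I : ↥(cInd K ρ) →ₗ[C] ↥(fInd P τP)) : V →ₗ[C] W where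
  toFun v := (↑(I (unitElt K ρ v)) : G → W) 1
  map_add' v w := by rw [unitElt_add, map_add]; rfl
  map_smul' c v := by rw [unitElt_smul, map_smul]; rfl

lemma fInd_translate (F : ↥(fInd P τP)) (p : ↥P) (x : G) :
    (F : G → W) (↑p * x) = τP p ((F : G → W) x) := F.2 p x

lemma fInd_value (F : ↥(fInd P τP)) (p : ↥P) :
    (F : G → W) ↑p = τP p ((F : G → W) 1) := by
  have := F.2 p 1
  rwa [mul_one] at this

/-- Key translation property of `ellOf`. -/
lemma ellOf_translate {I : ↥(cInd K ρ) →ₗ[C] ↥(fInd P τP)}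
    (hI : I ∈ HomG K P ρ τP) (k : ↥K) (v : V) :
    ellOf K P ρ τP I (ρ k v) = (↑(I (unitElt K ρ v)) : G → W) ↑k := by
  show (↑(I (unitElt K ρ (ρ k v))) : G → W) 1 = _
  rw [← cIndRep_unitElt K ρ k v]
  have h1 := LinearMap.congr_fun (hI ↑k) (unitElt K ρ v)
  simp only [LinearMap.comp_apply] at h1
  rw [h1]
  show (↑(I (unitElt K ρ v)) : G → W) (1 * ↑k) = _
  rw [one_mul]

include hNP hτ in
lemma ellOf_coinvKer {I : ↥(cInd K ρ) →ₗ[C] ↥(fInd P τP)} (hI : I ∈ HomG K P ρ τP) :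
    coinvKer K N ρ ≤ LinearMap.ker (ellOf K P ρ τP I) := by
  rw [coinvKer, Submodule.span_le]
  rintro x ⟨n, hn, v, rfl⟩
  simp only [SetLike.mem_coe, LinearMap.mem_ker, map_sub]
  rw [ellOf_translate K P ρ τP hI ⟨n, hn.1⟩ v]
  have hp : (↑(I (unitElt K ρ v)) : G → W) ↑(⟨n, hn.1⟩ : ↥K)
      = (↑(I (unitElt K ρ v)) : G → W) ↑(⟨n, hNP hn.2⟩ : ↥P) := rfl
  rw [hp, fInd_value P τP (I (unitElt K ρ v)) ⟨n, hNP hn.2⟩, hτ ⟨n, hNP hn.2⟩ hn.2]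
  show ellOf K P ρ τP I v - ellOf K P ρ τP I v = 0
  exact sub_self _

/-- The map `λ_I : V_{K∩N} → W`. -/
def lamOf (I : ↥(cInd K ρ) →ₗ[C] ↥(fInd P τP)) (hI : I ∈ HomG K P ρ τP) :
    (V ⧸ coinvKer K N ρ) →ₗ[C] W :=
  Submodule.liftQ _ (ellOf K P ρ τP I) (ellOf_coinvKer K P N hNP ρ τP hτ hI)

lemma lamOf_mk (I : ↥(cInd K ρ) →ₗ[C] ↥(fInd P τP)) (hI : I ∈ HomG K P ρ τP) (v : V) :
    lamOf K P N hNP ρ τP hτ I hI (Submodule.Quotient.mk v)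
      = (↑(I (unitElt K ρ v)) : G → W) 1 := rfl

lemma rhoBar_mk (kk : ↥((K ⊓ M).subgroupOf M)) (v : V) :
    rhoBar K M N ρ hnorm kk (Submodule.Quotient.mk v)
      = (Submodule.Quotient.mk (ρ ⟨↑↑kk, kk.2.1⟩ v) : V ⧸ coinvKer K N ρ) := rfl

include hNP hτ in
/-- Equivariance of `λ_I` with respect to `K ∩ M`. -/
lemma lamOf_equivariant {I : ↥(cInd K ρ) →ₗ[C] ↥(fInd P τP)} (hI : I ∈ HomG K P ρ τP)
    (kk : ↥((K ⊓ M).subgroupOf M)) (x : V ⧸ coinvKer K N ρ) :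
    lamOf K P N hNP ρ τP hτ I hI (rhoBar K M N ρ hnorm kk x)
      = tauM hMP τP ↑kk (lamOf K P N hNP ρ τP hτ I hI x) := by
  obtain ⟨v, rfl⟩ := Submodule.Quotient.mk_surjective _ x
  rw [rhoBar_mk, lamOf_mk, lamOf_mk]
  show ellOf K P ρ τP I (ρ ⟨↑↑kk, kk.2.1⟩ v) = _
  rw [ellOf_translate K P ρ τP hI ⟨↑↑kk, kk.2.1⟩ v]
  have hp : (↑(I (unitElt K ρ v)) : G → W) ↑(⟨↑↑kk, kk.2.1⟩ : ↥K)
      = (↑(I (unitElt K ρ v)) : G → W) ↑(Subgroup.inclusion hMP ↑kk) := rfl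
  rw [hp, fInd_value P τP (I (unitElt K ρ v)) (Subgroup.inclusion hMP ↑kk)]
  rfl

lemma mk_rho_eq {n : G} (hn : n ∈ K ⊓ N) (x : V) :
    (Submodule.Quotient.mk (ρ ⟨n, hn.1⟩ x) : V ⧸ coinvKer K N ρ)
      = Submodule.Quotient.mk x := by
  rw [Submodule.Quotient.eq]
  exact Submodule.subset_span ⟨n, hn, x, rfl⟩

include hMN hKP in
lemma mn_mem_K {m n : G} (hm : m ∈ M) (hn : n ∈ N) (h : m * n ∈ K) (hP : m * n ∈ P) :
    m ∈ K ⊓ M := by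
  obtain ⟨κM, hκM, κN, hκN, hz⟩ := hKP (m * n) ⟨h, hP⟩
  have key : κM⁻¹ * m = κN * n⁻¹ := by
    have h2 : m = κM * κN * n⁻¹ := by rw [← hz]; group
    rw [h2]; group
  have hmem : κM⁻¹ * m ∈ M ⊓ N := Subgroup.mem_inf.mpr
    ⟨mul_mem (inv_mem hκM.2) hm, key ▸ mul_mem hκN.2 (inv_mem hn)⟩
  rw [hMN, Subgroup.mem_bot] at hmem
  have : κM = m := inv_mul_eq_one.mp hmem
  exact this ▸ hκM

include hMP hNP hMN hNnormal hKP in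
lemma nm_mem_K {n m : G} (hn : n ∈ N) (hm : m ∈ M) (h : n * m ∈ K) :
    m ∈ K ⊓ M ∧ n ∈ K ⊓ N := by
  have hw : m⁻¹ * n * m ∈ N := by
    have := hNnormal m⁻¹ (inv_mem (hMP hm)) n hn
    rwa [inv_inv] at this
  have he : m * (m⁻¹ * n * m) ∈ K := by
    have e : m * (m⁻¹ * n * m) = n * m := by group
    rw [e]; exact h
  have hP : m * (m⁻¹ * n * m) ∈ P := mul_mem (hMP hm) (hNP hw)
  have hmKM : m ∈ K ⊓ M := mn_mem_K K P M N hMN hKP hm hw he hP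
  refine ⟨hmKM, Subgroup.mem_inf.mpr ⟨?_, hn⟩⟩
  have e2 : n = n * m * m⁻¹ := by group
  rw [e2]; exact mul_mem h (inv_mem hmKM.1)

include hMP hNP hMN hNnormal hKP in
lemma cosetM_lemma {g sG : G} {m m' : ↥M} {n n' : ↥N} {k k' : G}
    (hk : k ∈ K) (hk' : k' ∈ K)
    (h1 : (↑n : G) * ↑m * g = k * sG) (h2 : (↑n' : G) * ↑m' * g = k' * sG) :
    (↑m' : G) * (↑m : G)⁻¹ ∈ K ⊓ M := by
  have hm2M : (↑m' : G) * (↑m : G)⁻¹ ∈ M := mul_mem m'.2 (inv_mem m.2)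
  set m2 : G := ↑m' * (↑m : G)⁻¹ with hm2def
  have hwN : m2⁻¹ * ↑n' * m2 * (↑n : G)⁻¹ ∈ N := by
    have h5 : m2⁻¹ * ↑n' * m2 ∈ N := by
      have := hNnormal m2⁻¹ (inv_mem (hMP hm2M)) ↑n' n'.2
      rwa [inv_inv] at this
    exact mul_mem h5 (inv_mem n.2)
  have hzK : m2 * (m2⁻¹ * ↑n' * m2 * (↑n : G)⁻¹) ∈ K := by
    have e1 : (↑n : G) * ↑m * g * sG⁻¹ = k := by rw [h1]; group
    have e2 : (↑n' : G) * ↑m' * g * sG⁻¹ = k' := by rw [h2]; group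
    have e : m2 * (m2⁻¹ * ↑n' * m2 * (↑n : G)⁻¹) = k' * k⁻¹ := by
      rw [← e1, ← e2, hm2def]; group
    rw [e]; exact mul_mem hk' (inv_mem hk)
  exact mn_mem_K K P M N hMN hKP hm2M hwN hzK (mul_mem (hMP hm2M) (hNP hwN))

/-- The function on `(K∩N)\N` underlying `E(f,g)(m)`. -/
def eFun (f : ↥(cInd K ρ)) (g : G) (m : ↥M) :
    Quotient (QuotientGroup.rightRel ((K ⊓ N).subgroupOf N)) → V ⧸ coinvKer K N ρ :=
  Quotient.lift (fun n : ↥N =>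
      (Submodule.Quotient.mk ((f : G → V) (↑n * ↑m * g)) : V ⧸ coinvKer K N ρ)) (by
    intro a b hab
    have hk : ((b * a⁻¹ : ↥N) : G) ∈ K ⊓ N :=
      Subgroup.mem_subgroupOf.mp (QuotientGroup.rightRel_apply.mp hab)
    have hb : (↑b : G) * ↑m * g
        = ↑(⟨↑(b * a⁻¹), hk.1⟩ : ↥K) * ((↑a : G) * ↑m * g) := by
      push_cast; group
    rw [hb, cInd_equivariance K ρ f, mk_rho_eq K N ρ hk]
    )

lemma eFun_mk (f : ↥(cInd K ρ)) (g : G) (m : ↥M) (n : ↥N) :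
    eFun K M N ρ f g m (Quotient.mk _ n)
      = Submodule.Quotient.mk ((f : G → V) (↑n * ↑m * g)) := rfl

lemma eFun_support_finite (f : ↥(cInd K ρ)) (g : G) (m : ↥M) :
    (Function.support (eFun K M N ρ f g m)).Finite := by
  obtain ⟨S, hS⟩ := f.2.2
  have hsub : Function.support (eFun K M N ρ f g m) ⊆
      ⋃ s ∈ (S : Set G), {q | ∃ n : ↥N, q = Quotient.mk _ n ∧ ∃ k ∈ K,
        (↑n : G) * ↑m * g = k * s} := by
    intro q hq
    obtain ⟨n, rfl⟩ := Quotient.exists_rep q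
    have hne : eFun K M N ρ f g m (Quotient.mk _ n) ≠ 0 := hq
    have hf : (f : G → V) (↑n * ↑m * g) ≠ 0 := by
      intro h0
      exact hne (by rw [eFun_mk, h0, Submodule.Quotient.mk_zero])
    obtain ⟨s, hs, k, hk, he⟩ := hS _ hf
    exact Set.mem_biUnion hs ⟨n, rfl, k, hk, he⟩
  refine Set.Finite.subset (Set.Finite.biUnion S.finite_toSet fun s _ => ?_) hsub
  apply Set.Subsingleton.finite
  rintro q ⟨n, rfl, k, hk, he⟩ q' ⟨n', rfl, k', hk', he'⟩
  apply Quotient.sound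
  refine QuotientGroup.rightRel_apply.mpr (Subgroup.mem_subgroupOf.mpr ?_)
  have e : ((n' * n⁻¹ : ↥N) : G) = k' * k⁻¹ := by
    have e1 : (↑n : G) = k * s * g⁻¹ * (↑m : G)⁻¹ := by rw [← he]; group
    have e2 : (↑n' : G) = k' * s * g⁻¹ * (↑m : G)⁻¹ := by rw [← he']; group
    push_cast
    rw [e1, e2]; group
  refine Subgroup.mem_inf.mpr ⟨?_, (n' * n⁻¹).2⟩
  rw [e]
  exact mul_mem hk' (inv_mem hk)

/-- Conjugation as a bijection of the coset space `(K∩N)\N`. -/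
def conjEquiv (k : G) (hk1 : ∀ n ∈ N, k⁻¹ * n * k ∈ N) (hk2 : ∀ n ∈ N, k * n * k⁻¹ ∈ N)
    (hk3 : ∀ x ∈ K ⊓ N, k⁻¹ * x * k ∈ K ⊓ N) (hk4 : ∀ x ∈ K ⊓ N, k * x * k⁻¹ ∈ K ⊓ N) :
    Quotient (QuotientGroup.rightRel ((K ⊓ N).subgroupOf N))
      ≃ Quotient (QuotientGroup.rightRel ((K ⊓ N).subgroupOf N)) where
  toFun := Quotient.map (fun n : ↥N => (⟨k⁻¹ * ↑n * k, hk1 ↑n n.2⟩ : ↥N)) (by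
    intro a b hab
    refine QuotientGroup.rightRel_apply.mpr (Subgroup.mem_subgroupOf.mpr ?_)
    have h := Subgroup.mem_subgroupOf.mp (QuotientGroup.rightRel_apply.mp hab)
    have e : (((⟨k⁻¹ * ↑b * k, hk1 ↑b b.2⟩ : ↥N) * (⟨k⁻¹ * ↑a * k, hk1 ↑a a.2⟩ : ↥N)⁻¹ : ↥N) : G)
        = k⁻¹ * ↑(b * a⁻¹) * k := by push_cast; group
    rw [e]
    exact hk3 _ h)
  invFun := Quotient.map (fun n : ↥N => (⟨k * ↑n * k⁻¹, hk2 ↑n n.2⟩ : ↥N)) (by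
    intro a b hab
    refine QuotientGroup.rightRel_apply.mpr (Subgroup.mem_subgroupOf.mpr ?_)
    have h := Subgroup.mem_subgroupOf.mp (QuotientGroup.rightRel_apply.mp hab)
    have e : (((⟨k * ↑b * k⁻¹, hk2 ↑b b.2⟩ : ↥N) * (⟨k * ↑a * k⁻¹, hk2 ↑a a.2⟩ : ↥N)⁻¹ : ↥N) : G)
        = k * ↑(b * a⁻¹) * k⁻¹ := by push_cast; group
    rw [e]
    exact hk4 _ h)
  left_inv := by
    intro q; obtain ⟨n, rfl⟩ := Quotient.exists_rep q
    show Quotient.mk _ (⟨k * (k⁻¹ * ↑n * k) * k⁻¹, _⟩ : ↥N) = Quotient.mk _ n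
    exact congrArg _ (Subtype.ext (by group))
  right_inv := by
    intro q; obtain ⟨n, rfl⟩ := Quotient.exists_rep q
    show Quotient.mk _ (⟨k⁻¹ * (k * ↑n * k⁻¹) * k, _⟩ : ↥N) = Quotient.mk _ n
    exact congrArg _ (Subtype.ext (by group))

include hMP hNnormal in
lemma eBar_equivariant (f : ↥(cInd K ρ)) (g : G) (kk : ↥((K ⊓ M).subgroupOf M)) (m : ↥M) :
    (∑ᶠ q, eFun K M N ρ f g (↑kk * m) q)
      = rhoBar K M N ρ hnorm kk (∑ᶠ q, eFun K M N ρ f g m q) := by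
  set k : G := ↑↑kk with hkdef
  have hkM : k ∈ M := (↑kk : ↥M).2
  have hkKM : k ∈ K ⊓ M := kk.2
  have hk1 : ∀ n ∈ N, k⁻¹ * n * k ∈ N := fun n hn => by
    have := hNnormal k⁻¹ (inv_mem (hMP hkM)) n hn; rwa [inv_inv] at this
  have hk2 : ∀ n ∈ N, k * n * k⁻¹ ∈ N := fun n hn => hNnormal k (hMP hkM) n hn
  have hk3 : ∀ x ∈ K ⊓ N, k⁻¹ * x * k ∈ K ⊓ N := fun x hx => by
    have := hnorm (⟨k, hkKM⟩ : ↥(K ⊓ M))⁻¹ x hx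
    simpa using this
  have hk4 : ∀ x ∈ K ⊓ N, k * x * k⁻¹ ∈ K ⊓ N := fun x hx => hnorm ⟨k, hkKM⟩ x hx
  set e := conjEquiv K N k hk1 hk2 hk3 hk4 with hedef
  have key : ∀ q, eFun K M N ρ f g (↑kk * m) q
      = rhoBar K M N ρ hnorm kk (eFun K M N ρ f g m (e q)) := by
    intro q; obtain ⟨n, rfl⟩ := Quotient.exists_rep q
    have he : e (Quotient.mk _ n) = Quotient.mk _ (⟨k⁻¹ * ↑n * k, hk1 ↑n n.2⟩ : ↥N) := rfl
    rw [he, eFun_mk, eFun_mk]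
    have harg : (↑n : G) * ↑(↑kk * m) * g
        = ↑(⟨↑↑kk, kk.2.1⟩ : ↥K) * (↑(⟨k⁻¹ * ↑n * k, hk1 ↑n n.2⟩ : ↥N) * ↑m * g) := by
      push_cast
      rw [← hkdef]
      group
    rw [harg, cInd_equivariance K ρ f, rhoBar_mk]
  rw [finsum_congr key]
  have hsupp : (Function.support fun q => eFun K M N ρ f g m (e q)).Finite := by
    have hpre : (Function.support fun q => eFun K M N ρ f g m (e q))
        = e ⁻¹' (Function.support (eFun K M N ρ f g m)) := rfl
    rw [hpre]
    exact Set.Finite.preimage (e.injective.injOn) (eFun_support_finite K M N ρ f g m)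
  rw [← finsum_comp_equiv e (f := eFun K M N ρ f g m)]
  exact ((rhoBar K M N ρ hnorm kk).toAddMonoidHom.map_finsum hsupp).symm

include hMP hNP hNnormal hMN hKP in
lemma eBar_mem (f : ↥(cInd K ρ)) (g : G) :
    (fun m : ↥M => ∑ᶠ q, eFun K M N ρ f g m q) ∈ cIndBar K M N ρ hnorm := by
  constructor
  · intro kk m
    exact eBar_equivariant K P M N hMP hNnormal hnorm ρ f g kk m
  · classical
    obtain ⟨S, hS⟩ := f.2.2
    set Ms : G → Set ↥M := fun s =>
      {m : ↥M | ∃ n : ↥N, ∃ k ∈ K, (↑n : G) * ↑m * g = k * s} with hMs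
    refine ⟨S.image (fun s => if h : (Ms s).Nonempty then h.choose else 1), ?_⟩
    intro m hm
    dsimp only at hm
    have hne : ∃ q, eFun K M N ρ f g m q ≠ 0 := by
      by_contra hc
      push_neg at hc
      exact hm (finsum_eq_zero_of_forall_eq_zero hc)
    obtain ⟨q, hq⟩ := hne
    obtain ⟨n, rfl⟩ := Quotient.exists_rep q
    have hf : (f : G → V) (↑n * ↑m * g) ≠ 0 := by
      intro h0
      exact hq (by rw [eFun_mk, h0, Submodule.Quotient.mk_zero])
    obtain ⟨s, hs, k, hk, he⟩ := hS _ hf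
    have hmMs : m ∈ Ms s := ⟨n, k, hk, he⟩
    have hnonempty : (Ms s).Nonempty := ⟨m, hmMs⟩
    set m0 : ↥M := hnonempty.choose with hm0
    have hm0Ms : m0 ∈ Ms s := hnonempty.choose_spec
    obtain ⟨n0, k0, hk0, he0⟩ := hm0Ms
    refine ⟨m0, ?_, m * m0⁻¹, ?_, by group⟩
    · refine Finset.mem_image.mpr ⟨s, hs, ?_⟩
      rw [dif_pos hnonempty]
    · refine Subgroup.mem_subgroupOf.mpr ?_
      have := cosetM_lemma K P M N hMP hNP hNnormal hMN hKP hk0 hk he0 he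
      simpa using this

/-- The element `E(f,g)` of `ind_{K∩M}^M V_{K∩N}`. -/
def eBar (f : ↥(cInd K ρ)) (g : G) : ↥(cIndBar K M N ρ hnorm) :=
  ⟨fun m : ↥M => ∑ᶠ q, eFun K M N ρ f g m q,
    eBar_mem K P M N hMP hNP hNnormal hMN hKP hnorm ρ f g⟩

include hNP hτ in
lemma lamOf_add {I1 I2 : ↥(cInd K ρ) →ₗ[C] ↥(fInd P τP)}
    (h1 : I1 ∈ HomG K P ρ τP) (h2 : I2 ∈ HomG K P ρ τP) (h12 : I1 + I2 ∈ HomG K P ρ τP) :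
    lamOf K P N hNP ρ τP hτ (I1 + I2) h12
      = lamOf K P N hNP ρ τP hτ I1 h1 + lamOf K P N hNP ρ τP hτ I2 h2 := by
  refine Submodule.linearMap_qext _ ?_
  ext v
  rfl

include hNP hτ in
lemma lamOf_smul (c : C) {I1 : ↥(cInd K ρ) →ₗ[C] ↥(fInd P τP)}
    (h1 : I1 ∈ HomG K P ρ τP) (hc : c • I1 ∈ HomG K P ρ τP) :
    lamOf K P N hNP ρ τP hτ (c • I1) hc = c • lamOf K P N hNP ρ τP hτ I1 h1 := by
  refine Submodule.linearMap_qext _ ?_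
  ext v
  rfl

include hMP hNP hNnormal hPprod in
lemma eBar_shift (f : ↥(cInd K ρ)) (x : G) (p : ↥P) :
    ∃ (mP : ↥M) (nP : ↥N), (↑p : G) = ↑mP * ↑nP ∧
      eBar K P M N hMP hNP hNnormal hMN hKP hnorm ρ f (↑p * x)
        = cIndRep ((K ⊓ M).subgroupOf M) (rhoBar K M N ρ hnorm) mP
            (eBar K P M N hMP hNP hNnormal hMN hKP hnorm ρ f x) := by
  obtain ⟨mP, hmP, nP, hnP, hp⟩ := hPprod ↑p p.2
  refine ⟨⟨mP, hmP⟩, ⟨nP, hnP⟩, hp, ?_⟩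
  apply Subtype.ext; funext m
  show ∑ᶠ q, eFun K M N ρ f (↑p * x) m q = ∑ᶠ q, eFun K M N ρ f x (m * ⟨mP, hmP⟩) q
  have hn4 : (↑m * mP) * nP * ((↑m : G) * mP)⁻¹ ∈ N :=
    hNnormal (↑m * mP) (mul_mem (hMP m.2) (hMP hmP)) nP hnP
  set n4 : ↥N := ⟨(↑m * mP) * nP * ((↑m : G) * mP)⁻¹, hn4⟩ with hn4def
  set e := rcosetMul ((K ⊓ N).subgroupOf N) n4 with hedef
  have key : ∀ q, eFun K M N ρ f (↑p * x) m q = eFun K M N ρ f x (m * ⟨mP, hmP⟩) (e q) := by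
    intro q; obtain ⟨n, rfl⟩ := Quotient.exists_rep q
    have he : e (Quotient.mk _ n) = Quotient.mk _ (n * n4) := rfl
    rw [he, eFun_mk, eFun_mk]
    have harg : (↑n : G) * ↑m * (↑p * x)
        = (↑n * ((↑m : G) * mP * nP * ((↑m : G) * mP)⁻¹)) * ((↑m : G) * mP) * x := by
      rw [hp]; group
    rw [harg]
    rfl
  rw [finsum_congr key, finsum_comp_equiv e (f := eFun K M N ρ f x (m * ⟨mP, hmP⟩))]

include hMP hNP hNnormal hMN hPprod hKP hτ in
lemma Imap_mem_fInd (u : ↥(cIndBar K M N ρ hnorm) →ₗ[C] W)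
    (hu : u ∈ HomBar K P M N hMP ρ hnorm τP) (f : ↥(cInd K ρ)) :
    (fun g => u (eBar K P M N hMP hNP hNnormal hMN hKP hnorm ρ f g)) ∈ fInd P τP := by
  intro p x
  obtain ⟨mP, nP, hp, heB⟩ :=
    eBar_shift K P M N hMP hNP hNnormal hMN hPprod hKP hnorm ρ f x p
  dsimp only
  rw [heB]
  have h1 := LinearMap.congr_fun (hu mP)
    (eBar K P M N hMP hNP hNnormal hMN hKP hnorm ρ f x)
  simp only [LinearMap.comp_apply] at h1
  refine h1.trans ?_
  have hpp : p = (⟨↑mP, hMP mP.2⟩ : ↥P) * ⟨↑nP, hNP nP.2⟩ := Subtype.ext (by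
    rw [hp]; rfl)
  have htau : τP p = tauM hMP τP mP := by
    rw [hpp, map_mul, hτ ⟨↑nP, hNP nP.2⟩ nP.2, mul_one]
    rfl
  rw [htau]

/-- The intertwiner `I_u` attached to `u`. -/
def Imap (u : ↥(cIndBar K M N ρ hnorm) →ₗ[C] W)
    (hu : u ∈ HomBar K P M N hMP ρ hnorm τP) : ↥(cInd K ρ) →ₗ[C] ↥(fInd P τP) where
  toFun f := ⟨fun g => u (eBar K P M N hMP hNP hNnormal hMN hKP hnorm ρ f g),
    Imap_mem_fInd K P M N hMP hNP hNnormal hMN hPprod hKP hnorm ρ τP hτ u hu f⟩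
  map_add' f f' := by
    apply Subtype.ext; funext g
    have he : eBar K P M N hMP hNP hNnormal hMN hKP hnorm ρ (f + f') g
        = eBar K P M N hMP hNP hNnormal hMN hKP hnorm ρ f g
          + eBar K P M N hMP hNP hNnormal hMN hKP hnorm ρ f' g := by
      apply Subtype.ext; funext m
      show ∑ᶠ q, eFun K M N ρ (f + f') g m q
          = (∑ᶠ q, eFun K M N ρ f g m q) + ∑ᶠ q, eFun K M N ρ f' g m q
      have hone : eFun K M N ρ (f + f') g m = eFun K M N ρ f g m + eFun K M N ρ f' g m := by
        funext q; obtain ⟨n, rfl⟩ := Quotient.exists_rep q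
        show Submodule.Quotient.mk (((f + f' : ↥(cInd K ρ)) : G → V) (↑n * ↑m * g)) = _
        have : ((f + f' : ↥(cInd K ρ)) : G → V) (↑n * ↑m * g)
            = (f : G → V) (↑n * ↑m * g) + (f' : G → V) (↑n * ↑m * g) := rfl
        rw [this, Submodule.Quotient.mk_add]
        rfl
      rw [hone]
      exact finsum_add_distrib (eFun_support_finite K M N ρ f g m)
        (eFun_support_finite K M N ρ f' g m)
    show u _ = u _ + u _
    rw [he, map_add]
  map_smul' c f := by
    apply Subtype.ext; funext g
    have he : eBar K P M N hMP hNP hNnormal hMN hKP hnorm ρ (c • f) g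
        = c • eBar K P M N hMP hNP hNnormal hMN hKP hnorm ρ f g := by
      apply Subtype.ext; funext m
      show ∑ᶠ q, eFun K M N ρ (c • f) g m q = c • ∑ᶠ q, eFun K M N ρ f g m q
      have hone : eFun K M N ρ (c • f) g m = c • eFun K M N ρ f g m := by
        funext q; obtain ⟨n, rfl⟩ := Quotient.exists_rep q
        show Submodule.Quotient.mk (((c • f : ↥(cInd K ρ)) : G → V) (↑n * ↑m * g)) = _
        have : ((c • f : ↥(cInd K ρ)) : G → V) (↑n * ↑m * g)
            = c • (f : G → V) (↑n * ↑m * g) := rfl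
        rw [this, Submodule.Quotient.mk_smul]
        rfl
      rw [hone]
      exact (smul_finsum' c (eFun_support_finite K M N ρ f g m)).symm
    show u _ = c • u _
    rw [he, map_smul]

include hMP hNP hNnormal hMN hPprod hKP hτ in
lemma Imap_mem (u : ↥(cIndBar K M N ρ hnorm) →ₗ[C] W)
    (hu : u ∈ HomBar K P M N hMP ρ hnorm τP) :
    Imap K P M N hMP hNP hNnormal hMN hPprod hKP hnorm ρ τP hτ u hu ∈ HomG K P ρ τP := by
  intro g₀
  ext f x
  show u (eBar K P M N hMP hNP hNnormal hMN hKP hnorm ρ (cIndRep K ρ g₀ f) x)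
      = u (eBar K P M N hMP hNP hNnormal hMN hKP hnorm ρ f (x * g₀))
  congr 1
  apply Subtype.ext; funext m
  refine finsum_congr fun q => ?_
  obtain ⟨n, rfl⟩ := Quotient.exists_rep q
  rw [eFun_mk, eFun_mk]
  show Submodule.Quotient.mk ((f : G → V) ((↑n * ↑m * x) * g₀)) = _
  rw [mul_assoc (↑n * ↑m : G) x g₀]

include hMP hNP hNnormal hMN hKP in
lemma eBar_unit (v : V) :
    eBar K P M N hMP hNP hNnormal hMN hKP hnorm ρ (unitElt K ρ v) 1
      = unitBar K M N ρ hnorm v := by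
  apply Subtype.ext; funext m
  show ∑ᶠ q, eFun K M N ρ (unitElt K ρ v) 1 m q
      = unitFn ((K ⊓ M).subgroupOf M) (rhoBar K M N ρ hnorm) (Submodule.Quotient.mk v) m
  by_cases hm : m ∈ (K ⊓ M).subgroupOf M
  · have hmK : (↑m : G) ∈ K ⊓ M := Subgroup.mem_subgroupOf.mp hm
    rw [unitFn_apply_mem _ _ _ hm]
    have h1 : ∀ q, q ≠ Quotient.mk (QuotientGroup.rightRel ((K ⊓ N).subgroupOf N)) 1 →
        eFun K M N ρ (unitElt K ρ v) 1 m q = 0 := by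
      intro q hq
      obtain ⟨n, rfl⟩ := Quotient.exists_rep q
      rw [eFun_mk]
      by_cases hnm : (↑n : G) * ↑m * 1 ∈ K
      · exfalso
        apply hq
        apply Quotient.sound
        refine QuotientGroup.rightRel_apply.mpr (Subgroup.mem_subgroupOf.mpr ?_)
        have hnK : (↑n : G) ∈ K := by
          have e : (↑n : G) = (↑n * ↑m * 1) * (↑m : G)⁻¹ := by group
          rw [e]; exact mul_mem hnm (inv_mem hmK.1)
        have hgoal : ((1 * n⁻¹ : ↥N) : G) ∈ K ⊓ N := by
          push_cast
          refine Subgroup.mem_inf.mpr ⟨by simpa using inv_mem hnK, by simpa using inv_mem n.2⟩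
        exact hgoal
      · rw [unitElt_coe, unitFn_apply_not_mem _ _ _ hnm, Submodule.Quotient.mk_zero]
    rw [finsum_eq_single _ _ h1, eFun_mk]
    have e : ((1 : ↥N) : G) * ↑m * 1 = (↑m : G) := by simp
    rw [e, unitElt_coe, unitFn_apply_mem _ _ _ hmK.1]
    rfl
  · rw [unitFn_apply_not_mem _ _ _ hm]
    apply finsum_eq_zero_of_forall_eq_zero
    intro q
    obtain ⟨n, rfl⟩ := Quotient.exists_rep q
    rw [eFun_mk]
    by_cases hnm : (↑n : G) * ↑m * 1 ∈ K
    · exfalso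
      apply hm
      refine Subgroup.mem_subgroupOf.mpr ?_
      have hnmK : (↑n : G) * ↑m ∈ K := by rwa [mul_one] at hnm
      exact (nm_mem_K K P M N hMP hNP hNnormal hMN hKP n.2 m.2 hnmK).1
    · rw [unitElt_coe, unitFn_apply_not_mem _ _ _ hnm, Submodule.Quotient.mk_zero]

/-- The map `j` as a linear map. -/
def jmap : ↥(HomG K P ρ τP) →ₗ[C] ↥(HomBar K P M N hMP ρ hnorm τP) where
  toFun I := ⟨uHat ((K ⊓ M).subgroupOf M) (rhoBar K M N ρ hnorm) (tauM hMP τP)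
      (lamOf K P N hNP ρ τP hτ ↑I I.2)
      (lamOf_equivariant K P M N hMP hNP hnorm ρ τP hτ I.2),
    uHat_equivariant _ _ _ _ _⟩
  map_add' I I' := Subtype.ext (by
    have hadd := lamOf_add K P N hNP ρ τP hτ I.2 I'.2 (I + I').2
    have h2 : ∀ (kk : ↥((K ⊓ M).subgroupOf M)) (x : V ⧸ coinvKer K N ρ),
        (lamOf K P N hNP ρ τP hτ ↑I I.2 + lamOf K P N hNP ρ τP hτ ↑I' I'.2)
            (rhoBar K M N ρ hnorm kk x)
          = tauM hMP τP ↑kk ((lamOf K P N hNP ρ τP hτ ↑I I.2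
              + lamOf K P N hNP ρ τP hτ ↑I' I'.2) x) := by
      intro kk x
      simp only [LinearMap.add_apply, lamOf_equivariant K P M N hMP hNP hnorm ρ τP hτ I.2,
        lamOf_equivariant K P M N hMP hNP hnorm ρ τP hτ I'.2, map_add]
    exact (uHat_congr ((K ⊓ M).subgroupOf M) (rhoBar K M N ρ hnorm) (tauM hMP τP)
        (lamOf_equivariant K P M N hMP hNP hnorm ρ τP hτ (I + I').2) h2 hadd).trans
      (uHat_add ((K ⊓ M).subgroupOf M) (rhoBar K M N ρ hnorm) (tauM hMP τP)
        (lamOf_equivariant K P M N hMP hNP hnorm ρ τP hτ I.2)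
        (lamOf_equivariant K P M N hMP hNP hnorm ρ τP hτ I'.2) h2))
  map_smul' c I := Subtype.ext (by
    have hsmul := lamOf_smul K P N hNP ρ τP hτ c I.2 (c • I).2
    have h2 : ∀ (kk : ↥((K ⊓ M).subgroupOf M)) (x : V ⧸ coinvKer K N ρ),
        (c • lamOf K P N hNP ρ τP hτ ↑I I.2) (rhoBar K M N ρ hnorm kk x)
          = tauM hMP τP ↑kk ((c • lamOf K P N hNP ρ τP hτ ↑I I.2) x) := by
      intro kk x
      simp only [LinearMap.smul_apply, lamOf_equivariant K P M N hMP hNP hnorm ρ τP hτ I.2,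
        map_smul]
    exact (uHat_congr ((K ⊓ M).subgroupOf M) (rhoBar K M N ρ hnorm) (tauM hMP τP)
        (lamOf_equivariant K P M N hMP hNP hnorm ρ τP hτ (c • I).2) h2 hsmul).trans
      (uHat_smul ((K ⊓ M).subgroupOf M) (rhoBar K M N ρ hnorm) (tauM hMP τP) c
        (lamOf_equivariant K P M N hMP hNP hnorm ρ τP hτ I.2) h2))

include hNP hτ in
lemma jmap_char (I : ↥(HomG K P ρ τP)) (v : V) :
    (↑(jmap K P M N hMP hNP hnorm ρ τP hτ I) : ↥(cIndBar K M N ρ hnorm) →ₗ[C] W)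
        (unitBar K M N ρ hnorm v)
      = (↑((↑I : ↥(cInd K ρ) →ₗ[C] ↥(fInd P τP)) (unitElt K ρ v)) : G → W) 1 := by
  show uHat ((K ⊓ M).subgroupOf M) (rhoBar K M N ρ hnorm) (tauM hMP τP)
      (lamOf K P N hNP ρ τP hτ ↑I I.2)
      (lamOf_equivariant K P M N hMP hNP hnorm ρ τP hτ I.2)
      (unitElt ((K ⊓ M).subgroupOf M) (rhoBar K M N ρ hnorm) (Submodule.Quotient.mk v)) = _
  rw [uHat_unitElt]
  rfl

end Specific

theorem statement1 {V : Type} [AddCommGroup V] [Module C V]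
    (K P M N : Subgroup G)
    (hMP : M ≤ P) (hNP : N ≤ P)
    (hNnormal : ∀ p ∈ P, ∀ n' ∈ N, p * n' * p⁻¹ ∈ N)
    (hMN : M ⊓ N = ⊥)
    (hPprod : ∀ p ∈ P, ∃ m ∈ M, ∃ n' ∈ N, p = m * n')
    (hG : ∀ g : G, ∃ k ∈ K, ∃ p ∈ P, g = k * p)
    (hKP : ∀ x ∈ K ⊓ P, ∃ m ∈ K ⊓ M, ∃ n' ∈ K ⊓ N, x = m * n')
    (hnorm : ∀ (m : ↥(K ⊓ M)) (n' : G), n' ∈ K ⊓ N → ↑m * n' * (↑m)⁻¹ ∈ K ⊓ N)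
    (ρ : Representation C ↥K V) :
    -- existence and uniqueness of the C-linear bijection j, for every W
    (∀ (W : Type) [AddCommGroup W] [Module C W],
      ∀ τP : Representation C ↥P W, (∀ x : ↥P, (x : G) ∈ N → τP x = 1) →
      ∃ j : ↥(HomG K P ρ τP) ≃ₗ[C] ↥(HomBar K P M N hMP ρ hnorm τP),
        (∀ I : ↥(HomG K P ρ τP), charJ K P M N ρ hnorm τP ↑I ↑(j I)) ∧
        (∀ (I : ↥(HomG K P ρ τP)) (u : ↥(cIndBar K M N ρ hnorm) →ₗ[C] W),
          u ∈ HomBar K P M N hMP ρ hnorm τP →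
          charJ K P M N ρ hnorm τP ↑I u → u = ↑(j I))) ∧
    -- naturality of j in W
    (∀ (W W' : Type) [AddCommGroup W] [Module C W] [AddCommGroup W'] [Module C W'],
      ∀ (τP : Representation C ↥P W) (τP' : Representation C ↥P W'),
      (∀ x : ↥P, (x : G) ∈ N → τP x = 1) → (∀ x : ↥P, (x : G) ∈ N → τP' x = 1) →
      ∀ α : W' →ₗ[C] W, (∀ m : ↥M, α ∘ₗ tauM hMP τP' m = tauM hMP τP m ∘ₗ α) →
      ∀ I' ∈ HomG K P ρ τP',
      ∀ u' ∈ HomBar K P M N hMP ρ hnorm τP',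
        charJ K P M N ρ hnorm τP' I' u' →
        ∀ u ∈ HomBar K P M N hMP ρ hnorm τP,
          (∀ v : V, u (unitBar K M N ρ hnorm v) = α ((↑(I' (unitElt K ρ v)) : G → W') 1)) →
          u = α ∘ₗ u') := by
  constructor
  · intro W _ _ τP hτ
    have hbij : Function.Bijective (jmap K P M N hMP hNP hnorm ρ τP hτ) := by
      constructor
      · intro I I' hII
        have hlamv : ∀ v : V,
            (↑((↑I : ↥(cInd K ρ) →ₗ[C] ↥(fInd P τP)) (unitElt K ρ v)) : G → W) 1
              = (↑((↑I' : ↥(cInd K ρ) →ₗ[C] ↥(fInd P τP)) (unitElt K ρ v)) : G → W) 1 := by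
          intro v
          have e1 := jmap_char K P M N hMP hNP hnorm ρ τP hτ I v
          have e2 := jmap_char K P M N hMP hNP hnorm ρ τP hτ I' v
          rw [← e1, ← e2, hII]
        have hfull : ∀ v : V, (↑I : ↥(cInd K ρ) →ₗ[C] ↥(fInd P τP)) (unitElt K ρ v)
            = (↑I' : ↥(cInd K ρ) →ₗ[C] ↥(fInd P τP)) (unitElt K ρ v) := by
          intro v
          apply Subtype.ext; funext g
          obtain ⟨k, hk, p, hp, hg⟩ := hG g⁻¹
          have hge : g = ↑((⟨p, hp⟩ : ↥P)⁻¹) * k⁻¹ := by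
            rw [← inv_inv g, hg, mul_inv_rev]; rfl
          have hstep : ∀ (J : ↥(cInd K ρ) →ₗ[C] ↥(fInd P τP)), J ∈ HomG K P ρ τP →
              (↑(J (unitElt K ρ v)) : G → W) g
                = τP (⟨p, hp⟩ : ↥P)⁻¹
                    ((↑(J (unitElt K ρ (ρ (⟨k, hk⟩ : ↥K)⁻¹ v))) : G → W) 1) := by
            intro J hJ
            conv_lhs => rw [hge]
            rw [fInd_translate P τP (J (unitElt K ρ v)) (⟨p, hp⟩ : ↥P)⁻¹ k⁻¹]
            congr 1
            exact (ellOf_translate K P ρ τP hJ (⟨k, hk⟩ : ↥K)⁻¹ v).symm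
          rw [hstep ↑I I.2, hstep ↑I' I'.2, hlamv (ρ (⟨k, hk⟩ : ↥K)⁻¹ v)]
        exact Subtype.ext (homEq_of_unit K ρ (fIndRep P τP) I.2 I'.2 hfull)
      · intro u
        refine ⟨⟨Imap K P M N hMP hNP hNnormal hMN hPprod hKP hnorm ρ τP hτ ↑u u.2,
          Imap_mem K P M N hMP hNP hNnormal hMN hPprod hKP hnorm ρ τP hτ ↑u u.2⟩, ?_⟩
        apply Subtype.ext
        have hagree : ∀ x : V ⧸ coinvKer K N ρ,
            (↑(jmap K P M N hMP hNP hnorm ρ τP hτ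
                ⟨Imap K P M N hMP hNP hNnormal hMN hPprod hKP hnorm ρ τP hτ ↑u u.2,
                  Imap_mem K P M N hMP hNP hNnormal hMN hPprod hKP hnorm ρ τP hτ ↑u u.2⟩) :
              ↥(cIndBar K M N ρ hnorm) →ₗ[C] W)
              (unitElt ((K ⊓ M).subgroupOf M) (rhoBar K M N ρ hnorm) x)
            = (↑u : ↥(cIndBar K M N ρ hnorm) →ₗ[C] W)
                (unitElt ((K ⊓ M).subgroupOf M) (rhoBar K M N ρ hnorm) x) := by
          intro x
          obtain ⟨v, rfl⟩ := Submodule.Quotient.mk_surjective _ x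
          have e1 := jmap_char K P M N hMP hNP hnorm ρ τP hτ
            ⟨Imap K P M N hMP hNP hNnormal hMN hPprod hKP hnorm ρ τP hτ ↑u u.2,
              Imap_mem K P M N hMP hNP hNnormal hMN hPprod hKP hnorm ρ τP hτ ↑u u.2⟩ v
          refine e1.trans ?_
          show (↑u : ↥(cIndBar K M N ρ hnorm) →ₗ[C] W)
              (eBar K P M N hMP hNP hNnormal hMN hKP hnorm ρ (unitElt K ρ v) 1) = _
          rw [eBar_unit K P M N hMP hNP hNnormal hMN hKP hnorm ρ v]
          rfl
        exact homEq_of_unit ((K ⊓ M).subgroupOf M) (rhoBar K M N ρ hnorm) (tauM hMP τP)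
          (jmap K P M N hMP hNP hnorm ρ τP hτ
            ⟨Imap K P M N hMP hNP hNnormal hMN hPprod hKP hnorm ρ τP hτ ↑u u.2,
              Imap_mem K P M N hMP hNP hNnormal hMN hPprod hKP hnorm ρ τP hτ ↑u u.2⟩).2
          u.2 hagree
    refine ⟨LinearEquiv.ofBijective _ hbij, ?_, ?_⟩
    · intro I v
      exact jmap_char K P M N hMP hNP hnorm ρ τP hτ I v
    · intro I u hu hchar
      exact homEq_of_unit ((K ⊓ M).subgroupOf M) (rhoBar K M N ρ hnorm) (tauM hMP τP)
        hu (jmap K P M N hMP hNP hnorm ρ τP hτ I).2 (fun x => by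
          obtain ⟨v, rfl⟩ := Submodule.Quotient.mk_surjective _ x
          exact (hchar v).trans (jmap_char K P M N hMP hNP hnorm ρ τP hτ I v).symm)
  · intro W W' _ _ _ _ τP τP' hτ hτ' α hα I' hI' u' hu' hchar' u hu hval
    have hmem : α ∘ₗ u' ∈ HomBar K P M N hMP ρ hnorm τP := by
      intro m
      ext h
      simp only [LinearMap.comp_apply]
      have h1 := LinearMap.congr_fun (hu' m) h
      simp only [LinearMap.comp_apply] at h1
      rw [h1]
      have h2 := LinearMap.congr_fun (hα m) (u' h)
      simp only [LinearMap.comp_apply] at h2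
      exact h2
    refine homEq_of_unit ((K ⊓ M).subgroupOf M) (rhoBar K M N ρ hnorm) (tauM hMP τP)
      hu hmem (fun x => ?_)
    obtain ⟨v, rfl⟩ := Submodule.Quotient.mk_surjective _ x
    exact (hval v).trans (congrArg α (hchar' v).symm)
end Paper
end
end

section
/- Let H be a nonzero right A-module that is finite-dimensional over C. The following are equivalent: (i) H ⊗_A B = 0; (ii) for every simple A-submodule N of H, N ⊗_A B = 0; (iii) for every C-algebra homomorphism χ : Z(A) → C for which there exists a nonzero h ∈ H with h·z = χ(z)·h for all z ∈ Z(A), one has χ(a₀) = 0 (equivalently, the localisation at a₀ of the one-dimensional Z(A)-module given by χ is zero). -/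
open MulOpposite

/-!
STATEMENT 9.  `C` an algebraically closed field, `A` a unital `C`-algebra, `f : A → B` an
injective `C`-algebra map, `b = f a₀ ∈ B` central invertible with `B = f(A)[b⁻¹]`
(`a₀` central in `A`).  Let `H` be a nonzero right `A`-module, finite-dimensional over `C`
(with `C`-bilinear action, `C` acting through the centre of `A`).  The following are
equivalent:
(i)  `H ⊗_A B = 0`, i.e. every realization `(L, ι)` of the localisation of `H` at `a₀`
     (encoded by the universal property `IsLocAt`) is zero;
(ii) `N ⊗_A B = 0` for every simple `A`-submodule `N` of `H`;
(iii) every `C`-algebra character `χ` of the centre `Z(A)` admitting a nonzero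
     `χ`-eigenvector in `H` satisfies `χ(a₀) = 0` (i.e. the localisation at `a₀` of the
     one-dimensional `Z(A)`-module given by `χ` is zero).
-/

/-- `(L, τ, ι)` realizes the localisation `M ⊗_A B` of the right `A`-module `(M, σ)`. -/
def IsLocAt {A B : Type} [Ring A] [Ring B] (f : A →+* B)
    {M : Type} [AddCommGroup M] (σ : Aᵐᵒᵖ →+* AddMonoid.End M)
    {L : Type} [AddCommGroup L] (τ : Bᵐᵒᵖ →+* AddMonoid.End L) (ι : M →+ L) : Prop :=
  (∀ (a : A) (m : M), ι (σ (op a) m) = τ (op (f a)) (ι m)) ∧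
  (∀ (X : Type) [AddCommGroup X] (ξ : Bᵐᵒᵖ →+* AddMonoid.End X) (g : M →+ X),
    (∀ (a : A) (m : M), g (σ (op a) m) = ξ (op (f a)) (g m)) →
    ∃! h : L →+ X, (∀ (b : B) (l : L), h (τ (op b) l) = ξ (op b) (h l)) ∧ h.comp ι = g)

section Aux

variable {A B : Type} [Ring A] [Ring B]

lemma endPowBridge {M : Type} [AddCommGroup M] (σ : Aᵐᵒᵖ →+* AddMonoid.End M)
    (a : A) (n : ℕ) : σ (op (a ^ n)) = (σ (op a)) ^ n := by
  rw [op_pow, map_pow]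

/-- If `a₀` acts locally nilpotently on `M`, then any realization of the localisation
is trivial. -/
lemma locTriv (f : A →+* B) (β : Bˣ) (a₀ : A) (ha₀ : f a₀ = ↑β)
    {M : Type} [AddCommGroup M] (σ : Aᵐᵒᵖ →+* AddMonoid.End M)
    {L : Type} [AddCommGroup L] (τ : Bᵐᵒᵖ →+* AddMonoid.End L) (ι : M →+ L)
    (hloc : IsLocAt f σ τ ι)
    (htor : ∀ m : M, ∃ n : ℕ, σ (op (a₀ ^ n)) m = 0) :
    Subsingleton L := by
  have hι : ∀ m : M, ι m = 0 := by
    intro m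
    obtain ⟨n, hn⟩ := htor m
    have h1 : ι (σ (op (a₀ ^ n)) m) = τ (op (f (a₀ ^ n))) (ι m) := hloc.1 _ m
    rw [hn, map_zero] at h1
    have h2 : τ (op ((β : B) ^ n)) (ι m) = 0 := by
      rw [← ha₀, ← map_pow f]
      exact h1.symm
    have h3 : τ (op ((↑β⁻¹ : B) ^ n)) (τ (op ((β : B) ^ n)) (ι m)) = ι m := by
      have : τ (op ((↑β⁻¹ : B) ^ n)) * τ (op ((β : B) ^ n)) = 1 := by
        rw [← map_mul, ← op_mul]
        have : (β : B) ^ n * (↑β⁻¹ : B) ^ n = 1 := by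
          rw [← Units.val_pow_eq_pow_val, ← Units.val_pow_eq_pow_val, ← Units.val_mul,
            inv_pow, mul_inv_cancel, Units.val_one]
        rw [this, op_one, map_one]
      calc τ (op ((↑β⁻¹ : B) ^ n)) (τ (op ((β : B) ^ n)) (ι m))
          = (τ (op ((↑β⁻¹ : B) ^ n)) * τ (op ((β : B) ^ n))) (ι m) := rfl
        _ = ι m := by rw [this]; rfl
    rw [h2, map_zero] at h3
    exact h3.symm
  have hι0 : ι = 0 := AddMonoidHom.ext fun m => hι m
  obtain ⟨h, _, huniq⟩ := hloc.2 L τ ι hloc.1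
  have hid : (AddMonoidHom.id L) = h := by
    apply huniq
    exact ⟨fun b l => rfl, AddMonoidHom.ext fun m => by simp [hι m]⟩
  have hzero : (0 : L →+ L) = h := by
    apply huniq
    constructor
    · intro b l; simp
    · ext m; simp [hι m]
  constructor
  intro l1 l2
  have e1 : l1 = h l1 := congrArg (fun φ => φ l1) hid
  have e2 : (0 : L) = h l1 := congrArg (fun φ : L →+ L => φ l1) hzero
  have e3 : l2 = h l2 := congrArg (fun φ => φ l2) hid
  have e4 : (0 : L) = h l2 := congrArg (fun φ : L →+ L => φ l2) hzero
  rw [e1, ← e2, e3, ← e4]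

end Aux

section Loc

variable {A B : Type} [Ring A] [Ring B]

lemma endMulApply {M : Type} [AddCommMonoid M] (f g : AddMonoid.End M) (x : M) :
    (f * g) x = f (g x) := rfl

lemma locExists (f : A →+* B) (hinj : Function.Injective f)
    (β : Bˣ) (hcentral : ∀ x : B, ↑β * x = x * ↑β)
    (a₀ : A) (ha₀ : f a₀ = ↑β) (ha₀c : ∀ g : A, g * a₀ = a₀ * g)
    (hgen : ∀ x : B, ∃ (a : A) (n : ℕ), x = f a * (↑β⁻¹ : B) ^ n)
    {M : Type} [AddCommGroup M] (σ : Aᵐᵒᵖ →+* AddMonoid.End M)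
    {M' : Type} [AddCommGroup M'] (σ' : Aᵐᵒᵖ →+* AddMonoid.End M')
    (π : M →+ M') (hπ : Function.Surjective π)
    (hcompat : ∀ (a : A) (m : M), π (σ (op a) m) = σ' (op a) (π m))
    (hker : ∀ m : M, π m = 0 → ∃ n : ℕ, σ (op (a₀ ^ n)) m = 0)
    (u : (AddMonoid.End M')ˣ) (hu : (u : AddMonoid.End M') = σ' (op a₀)) :
    ∃ τ : Bᵐᵒᵖ →+* AddMonoid.End M', IsLocAt f σ τ π := by
  -- centrality of β⁻¹ powers in B
  have hcinv : ∀ (n : ℕ) (x : B), (↑β⁻¹ : B) ^ n * x = x * (↑β⁻¹ : B) ^ n := by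
    intro n x
    have h1 : Commute (↑β : B) x := hcentral x
    exact ((h1.units_inv_left).pow_left n).eq
  have hcpow : ∀ (n : ℕ) (x : B), (↑β : B) ^ n * x = x * (↑β : B) ^ n := by
    intro n x
    have h1 : Commute (↑β : B) x := hcentral x
    exact (h1.pow_left n).eq
  -- commutation in End M'
  have hcommEnd : ∀ a : A, Commute (σ' (op a)) (↑u : AddMonoid.End M') := by
    intro a
    rw [hu]
    show σ' (op a) * σ' (op a₀) = σ' (op a₀) * σ' (op a)
    rw [← map_mul, ← map_mul, ← op_mul, ← op_mul, ha₀c a]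
  have hcommInv : ∀ a : A, Commute (σ' (op a)) (↑u⁻¹ : AddMonoid.End M') :=
    fun a => (hcommEnd a).units_inv_right
  -- key computation
  have keyA : ∀ (a : A) (n : ℕ),
      σ' (op (a * a₀ ^ n)) = σ' (op a) * (↑(u ^ n) : AddMonoid.End M') := by
    intro a n
    rw [op_mul, map_mul, endPowBridge σ' a₀ n, ← hu, ← Units.val_pow_eq_pow_val]
    exact ((hcommEnd a).pow_right n).eq.symm
  have keyB : ∀ (a : A) (n : ℕ), f (a * a₀ ^ n) = f a * ((β : B) ^ n) := by
    intro a n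
    rw [map_mul, map_pow, ha₀]
  -- units identities
  have g1 : ∀ n m : ℕ, u ^ m * u⁻¹ ^ (n + m) = u⁻¹ ^ n := by intro n m; group
  have gB1 : ∀ n m : ℕ, β⁻¹ ^ n * β ^ (n + m) = β ^ m := by intro n m; group
  have gB2 : ∀ n m : ℕ, β ^ m * β⁻¹ ^ (n + m) = β⁻¹ ^ n := by intro n m; group
  -- the action map
  set φ : B → AddMonoid.End M' := fun x =>
    σ' (op (hgen x).choose) * (↑(u⁻¹ ^ (hgen x).choose_spec.choose) : AddMonoid.End M')
    with hφ
  have spec : ∀ (x : B) (a : A) (n : ℕ), x = f a * (↑β⁻¹ : B) ^ n →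
      φ x = σ' (op a) * (↑(u⁻¹ ^ n) : AddMonoid.End M') := by
    intro x a n hx
    set a' : A := (hgen x).choose with ha'
    set m : ℕ := (hgen x).choose_spec.choose with hm
    have hx' : x = f a' * (↑β⁻¹ : B) ^ m := (hgen x).choose_spec.choose_spec
    have hφx : φ x = σ' (op a') * (↑(u⁻¹ ^ m) : AddMonoid.End M') := rfl
    have hstep : ∀ (k l : ℕ) (y : B),
        (y * (↑β⁻¹ : B) ^ k) * ((β : B)) ^ (k + l) = y * (↑β : B) ^ l := by
      intro k l y
      rw [mul_assoc]
      congr 1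
      calc (↑β⁻¹ : B) ^ k * (↑β : B) ^ (k + l)
          = ((β⁻¹ ^ k * β ^ (k + l) : Bˣ) : B) := by
            rw [Units.val_mul, Units.val_pow_eq_pow_val, Units.val_pow_eq_pow_val]
        _ = ((β ^ l : Bˣ) : B) := by rw [gB1 k l]
        _ = (↑β : B) ^ l := by rw [Units.val_pow_eq_pow_val]
    have h2 : f (a * a₀ ^ m) = f (a' * a₀ ^ n) := by
      rw [keyB, keyB]
      calc f a * (↑β : B) ^ m = (f a * (↑β⁻¹ : B) ^ n) * ((β : B)) ^ (n + m) :=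
            (hstep n m (f a)).symm
        _ = (f a' * (↑β⁻¹ : B) ^ m) * ((β : B)) ^ (n + m) := by rw [← hx, ← hx']
        _ = (f a' * (↑β⁻¹ : B) ^ m) * ((β : B)) ^ (m + n) := by rw [add_comm n m]
        _ = f a' * (↑β : B) ^ n := hstep m n _
    have hAA : a * a₀ ^ m = a' * a₀ ^ n := hinj h2
    have h3 : σ' (op (a * a₀ ^ m)) = σ' (op (a' * a₀ ^ n)) := by rw [hAA]
    rw [keyA, keyA] at h3
    have h4 := congrArg
      (fun T : AddMonoid.End M' => T * (↑(u⁻¹ ^ (n + m)) : AddMonoid.End M')) h3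
    simp only [mul_assoc, ← Units.val_mul] at h4
    rw [g1 n m] at h4
    rw [add_comm n m, g1 m n] at h4
    rw [hφx]
    exact h4.symm
  have hone : φ 1 = 1 := by
    have h := spec 1 1 0 (by simp)
    rw [h]
    simp
  have hzero : φ 0 = 0 := by
    have h := spec 0 0 0 (by simp)
    rw [h]
    simp
  refine ⟨{ toFun := fun p => φ (unop p), map_one' := ?_, map_mul' := ?_,
            map_zero' := ?_, map_add' := ?_ }, ?_, ?_⟩
  · show φ (unop 1) = 1
    rw [unop_one, hone]
  · intro p q
    obtain ⟨a, n, hx⟩ := hgen (unop p)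
    obtain ⟨a', m, hy⟩ := hgen (unop q)
    have hxy : unop (p * q) = f (a' * a) * (↑β⁻¹ : B) ^ (m + n) := by
      rw [unop_mul, hy, hx, mul_assoc, ← mul_assoc ((↑β⁻¹ : B) ^ m), hcinv m (f a),
        mul_assoc, ← pow_add, ← mul_assoc, ← map_mul]
    show φ (unop (p * q)) = φ (unop p) * φ (unop q)
    rw [spec _ _ _ hxy, spec _ _ _ hx, spec _ _ _ hy, op_mul, map_mul]
    have hc : σ' (op a') * (↑(u⁻¹ ^ n) : AddMonoid.End M') =
        (↑(u⁻¹ ^ n) : AddMonoid.End M') * σ' (op a') := by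
      rw [Units.val_pow_eq_pow_val]
      exact ((hcommInv a').pow_right n).eq
    calc σ' (op a) * σ' (op a') * (↑(u⁻¹ ^ (m + n)) : AddMonoid.End M')
        = σ' (op a) * σ' (op a') *
            ((↑(u⁻¹ ^ n) : AddMonoid.End M') * (↑(u⁻¹ ^ m) : AddMonoid.End M')) := by
          rw [← Units.val_mul, ← pow_add, add_comm n m]
      _ = (σ' (op a) * (↑(u⁻¹ ^ n) : AddMonoid.End M')) *
            (σ' (op a') * (↑(u⁻¹ ^ m) : AddMonoid.End M')) := by
          rw [mul_assoc, ← mul_assoc (σ' (op a')), hc, mul_assoc, ← mul_assoc]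
  · show φ (unop 0) = 0
    rw [unop_zero, hzero]
  · intro p q
    obtain ⟨a, n, hx⟩ := hgen (unop p)
    obtain ⟨a', m, hy⟩ := hgen (unop q)
    have hstep2 : ∀ (k l : ℕ) (y : B),
        y * (↑β : B) ^ k * (↑β⁻¹ : B) ^ (l + k) = y * (↑β⁻¹ : B) ^ l := by
      intro k l y
      rw [mul_assoc]
      congr 1
      calc (↑β : B) ^ k * (↑β⁻¹ : B) ^ (l + k)
          = ((β ^ k * β⁻¹ ^ (l + k) : Bˣ) : B) := by
            rw [Units.val_mul, Units.val_pow_eq_pow_val, Units.val_pow_eq_pow_val]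
        _ = ((β⁻¹ ^ l : Bˣ) : B) := by rw [gB2 l k]
        _ = (↑β⁻¹ : B) ^ l := by rw [Units.val_pow_eq_pow_val]
    have hxy : unop (p + q) = f (a * a₀ ^ m + a' * a₀ ^ n) * (↑β⁻¹ : B) ^ (n + m) := by
      rw [unop_add, hx, hy, map_add, add_mul, keyB, keyB, hstep2 m n (f a),
        add_comm n m, hstep2 n m (f a')]
    show φ (unop (p + q)) = φ (unop p) + φ (unop q)
    rw [spec _ _ _ hxy, spec _ _ _ hx, spec _ _ _ hy, op_add, map_add, add_mul,
      keyA, keyA, mul_assoc, ← Units.val_mul, g1 n m, mul_assoc, ← Units.val_mul,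
      add_comm n m, g1 m n]
  · intro a m
    have h := spec (f a) a 0 (by simp)
    show π (σ (op a) m) = φ (f a) (π m)
    rw [h, pow_zero]
    simp only [Units.val_one, mul_one]
    exact hcompat a m
  · intro X _ ξ g hg
    have hval_inv : ξ (op (↑β : B)) * ξ (op (↑β⁻¹ : B)) = 1 := by
      rw [← map_mul, ← op_mul, Units.inv_mul, op_one, map_one]
    have hinv_val : ξ (op (↑β⁻¹ : B)) * ξ (op (↑β : B)) = 1 := by
      rw [← map_mul, ← op_mul, Units.mul_inv, op_one, map_one]
    set E : (AddMonoid.End X)ˣ := ⟨ξ (op (↑β : B)), ξ (op (↑β⁻¹ : B)), hval_inv, hinv_val⟩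
      with hE
    have hξpow : ∀ k : ℕ, ξ (op (f (a₀ ^ k))) = (↑(E ^ k) : AddMonoid.End X) := by
      intro k
      rw [map_pow, ha₀, Units.val_pow_eq_pow_val]
      show ξ (op ((↑β : B) ^ k)) = (ξ (op (↑β : B))) ^ k
      rw [op_pow, map_pow]
    have hξinvpow : ∀ k : ℕ, ξ (op ((↑β⁻¹ : B) ^ k)) = (↑(E⁻¹ ^ k) : AddMonoid.End X) := by
      intro k
      rw [Units.val_pow_eq_pow_val]
      show ξ (op ((↑β⁻¹ : B) ^ k)) = (ξ (op (↑β⁻¹ : B))) ^ k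
      rw [op_pow, map_pow]
    have gkill : ∀ m : M, π m = 0 → g m = 0 := by
      intro m hm
      obtain ⟨k, hk⟩ := hker m hm
      have h1 : g (σ (op (a₀ ^ k)) m) = ξ (op (f (a₀ ^ k))) (g m) := hg _ m
      rw [hk, map_zero, hξpow k] at h1
      have gE : E⁻¹ ^ k * E ^ k = 1 := by group
      calc g m = ((↑(E⁻¹ ^ k) : AddMonoid.End X) * (↑(E ^ k) : AddMonoid.End X)) (g m) := by
            rw [← Units.val_mul, gE, Units.val_one]
            rfl
        _ = (↑(E⁻¹ ^ k) : AddMonoid.End X) ((↑(E ^ k) : AddMonoid.End X) (g m)) := rfl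
        _ = (↑(E⁻¹ ^ k) : AddMonoid.End X) 0 := by rw [← h1]
        _ = 0 := map_zero _
    have hfac : ∀ m m' : M, π m = π m' → g m = g m' := by
      intro m m' hmm
      have h1 : π (m - m') = 0 := by rw [map_sub, hmm, sub_self]
      have h2 := gkill _ h1
      rw [map_sub, sub_eq_zero] at h2
      exact h2
    have hsec : ∀ l : M', π (hπ l).choose = l := fun l => (hπ l).choose_spec
    set h0 : M' → X := fun l => g (hπ l).choose with hh0def
    have hh0 : ∀ m : M, h0 (π m) = g m := fun m => hfac _ _ (hsec (π m))
    have hadd : ∀ l l' : M', h0 (l + l') = h0 l + h0 l' := by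
      intro l l'
      obtain ⟨m, rfl⟩ := hπ l
      obtain ⟨m', rfl⟩ := hπ l'
      rw [← map_add, hh0, hh0, hh0, map_add]
    set h : M' →+ X := AddMonoidHom.mk' h0 hadd with hhdef
    have hhπ : ∀ m : M, h (π m) = g m := hh0
    have hA' : ∀ (a : A) (l : M'), h (σ' (op a) l) = ξ (op (f a)) (h l) := by
      intro a l
      obtain ⟨m, rfl⟩ := hπ l
      rw [← hcompat a m, hhπ, hhπ, hg]
    have huE : ∀ (k : ℕ) (l : M'),
        h ((↑(u ^ k) : AddMonoid.End M') l) = (↑(E ^ k) : AddMonoid.End X) (h l) := by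
      intro k l
      have hb : (↑(u ^ k) : AddMonoid.End M') = σ' (op (a₀ ^ k)) := by
        rw [Units.val_pow_eq_pow_val, hu, ← endPowBridge]
      rw [hb, hA' (a₀ ^ k) l, hξpow]
    have huEinv : ∀ (k : ℕ) (l : M'),
        h ((↑(u⁻¹ ^ k) : AddMonoid.End M') l) = (↑(E⁻¹ ^ k) : AddMonoid.End X) (h l) := by
      intro k l
      have hl : (↑(u ^ k) : AddMonoid.End M') ((↑(u⁻¹ ^ k) : AddMonoid.End M') l) = l := by
        rw [← endMulApply, ← Units.val_mul]
        have hc1 : u ^ k * u⁻¹ ^ k = 1 := by group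
        rw [hc1, Units.val_one]
        rfl
      have h2 : (↑(E ^ k) : AddMonoid.End X) (h ((↑(u⁻¹ ^ k) : AddMonoid.End M') l)) = h l := by
        rw [← huE k, hl]
      calc h ((↑(u⁻¹ ^ k) : AddMonoid.End M') l)
          = ((↑(E⁻¹ ^ k) : AddMonoid.End X) * (↑(E ^ k) : AddMonoid.End X))
              (h ((↑(u⁻¹ ^ k) : AddMonoid.End M') l)) := by
            rw [← Units.val_mul]
            have hc2 : E⁻¹ ^ k * E ^ k = 1 := by group
            rw [hc2, Units.val_one]
            rfl
        _ = (↑(E⁻¹ ^ k) : AddMonoid.End X) (h l) := by rw [endMulApply, h2]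
    refine ⟨h, ⟨?_, ?_⟩, ?_⟩
    · intro b l
      obtain ⟨a, k, hb⟩ := hgen b
      have hφb := spec b a k hb
      show h (φ b l) = ξ (op b) (h l)
      rw [hφb, endMulApply, hA', huEinv]
      rw [hb, op_mul, map_mul, endMulApply, hξinvpow]
      have hcB : (op ((↑β⁻¹ : B) ^ k)) * (op (f a)) = (op (f a)) * (op ((↑β⁻¹ : B) ^ k)) := by
        rw [← op_mul, ← op_mul, hcinv k (f a)]
      have hcX : ξ (op (f a)) * (↑(E⁻¹ ^ k) : AddMonoid.End X) =
          (↑(E⁻¹ ^ k) : AddMonoid.End X) * ξ (op (f a)) := by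
        rw [← hξinvpow, ← map_mul, ← map_mul, hcB]
      rw [← endMulApply, ← endMulApply, hcX]
    · ext m
      show h (π m) = g m
      exact hhπ m
    · intro h' hh'
      ext l
      obtain ⟨m, rfl⟩ := hπ l
      have h1 : h' (π m) = g m := by
        have h2 := congrArg (fun φ' : M →+ X => φ' m) hh'.2
        simpa using h2
      show h' (π m) = h (π m)
      rw [hhπ m, h1]

end Loc

set_option maxHeartbeats 1000000 in
theorem statement9 {C : Type} [Field C] [IsAlgClosed C]
    {A B : Type} [Ring A] [Ring B] [Algebra C A] [Algebra C B]
    (f : A →ₐ[C] B) (hinj : Function.Injective f)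
    (β : Bˣ) (hcentral : ∀ x : B, ↑β * x = x * ↑β)
    (a₀ : A) (ha₀ : f a₀ = ↑β) (ha₀c : a₀ ∈ Subalgebra.center C A)
    (hgen : ∀ x : B, ∃ (a : A) (n : ℕ), x = f a * (↑β⁻¹ : B) ^ n)
    {H : Type} [AddCommGroup H] [Module C H] [FiniteDimensional C H] [Nontrivial H]
    (σ : Aᵐᵒᵖ →+* AddMonoid.End H)
    (hCbil : ∀ (c : C) (a : A) (h : H), σ (op a) (c • h) = c • σ (op a) h)
    (hCact : ∀ (c : C) (h : H), σ (op (algebraMap C A c)) h = c • h) :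
    -- (i) : `H ⊗_A B = 0`
    let Pi : Prop := ∀ (L : Type) (_ : AddCommGroup L), ∀ (τ : Bᵐᵒᵖ →+* AddMonoid.End L),
      ∀ ι : H →+ L, IsLocAt (f : A →+* B) σ τ ι → Subsingleton L
    -- (ii) : `N ⊗_A B = 0` for every simple `A`-submodule `N ⊆ H`
    let Pii : Prop := ∀ N : AddSubgroup H,
      (∀ (a : A) (x : H), x ∈ N → σ (op a) x ∈ N) →
      (N ≠ ⊥ ∧ ∀ N' : AddSubgroup H, (∀ (a : A) (x : H), x ∈ N' → σ (op a) x ∈ N') →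
        N' ≤ N → N' = ⊥ ∨ N' = N) →
      ∀ σN : Aᵐᵒᵖ →+* AddMonoid.End ↥N,
        (∀ (a : A) (x : ↥N), (σN (op a) x : H) = σ (op a) ↑x) →
        ∀ (L : Type) (_ : AddCommGroup L), ∀ (τ : Bᵐᵒᵖ →+* AddMonoid.End L),
          ∀ ι : ↥N →+ L, IsLocAt (f : A →+* B) σN τ ι → Subsingleton L
    -- (iii) : characters of the centre appearing in `H` kill `a₀`
    let Piii : Prop := ∀ χ : ↥(Subalgebra.center C A) →ₐ[C] C,
      (∃ h : H, h ≠ 0 ∧ ∀ z : ↥(Subalgebra.center C A), σ (op ↑z) h = χ z • h) →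
      χ ⟨a₀, ha₀c⟩ = 0
    (Pi ↔ Pii) ∧ (Pi ↔ Piii) := by
  classical
  intro Pi Pii Piii
  -- central element commutation
  have hcA : ∀ g : A, g * a₀ = a₀ * g := fun g => Subalgebra.mem_center_iff.mp ha₀c g
  -- coerced versions of data about f
  have hinj' : Function.Injective (f : A →+* B) := hinj
  have ha₀' : (f : A →+* B) a₀ = ↑β := ha₀
  have hgen' : ∀ x : B, ∃ (a : A) (n : ℕ), x = (f : A →+* B) a * (↑β⁻¹ : B) ^ n := hgen
  -- the linearized action
  set lin : A → (H →ₗ[C] H) :=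
    fun a => ⟨⟨σ (op a), (σ (op a)).map_add⟩, fun c x => hCbil c a x⟩ with hlin
  have hlinapp : ∀ (a : A) (x : H), lin a x = σ (op a) x := fun a x => rfl
  have linpow : ∀ (a : A) (n : ℕ) (x : H), ((lin a) ^ n) x = σ (op (a ^ n)) x := by
    intro a n
    induction n with
    | zero =>
      intro x
      rw [pow_zero, pow_zero, Module.End.one_apply, op_one, map_one]
      rfl
    | succ n ih =>
      intro x
      rw [pow_succ, Module.End.mul_apply, ih, pow_succ', op_mul, map_mul, endMulApply]
      rfl
  have hcomm0 : ∀ a : A, σ (op a) * σ (op a₀) = σ (op a₀) * σ (op a) := by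
    intro a
    rw [← map_mul, ← map_mul, ← op_mul, ← op_mul, hcA a]
  have hcommE : ∀ (a : A) (x : H), σ (op a₀) (σ (op a) x) = σ (op a) (σ (op a₀) x) := by
    intro a x
    rw [← endMulApply, ← endMulApply, ← hcomm0 a]
  set d : ℕ := Module.finrank C H with hd
  set E : H →ₗ[C] H := lin a₀ with hE
  have hEcommpow : ∀ (a : A) (n : ℕ) (x : H), (E ^ n) (σ (op a) x) = σ (op a) ((E ^ n) x) := by
    intro a n
    induction n with
    | zero => intro x; rw [pow_zero, Module.End.one_apply, Module.End.one_apply]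
    | succ n ih =>
      intro x
      rw [pow_succ, Module.End.mul_apply, Module.End.mul_apply]
      have h1 : E (σ (op a) x) = σ (op a) (E x) := hcommE a x
      rw [h1, ih]
  -- the nilpotency condition
  have hNilPi : (∀ x : H, ∃ n : ℕ, σ (op (a₀ ^ n)) x = 0) → Pi := by
    intro hnil L _ τ ι hloc
    exact locTriv (f : A →+* B) β a₀ ha₀' σ τ ι hloc hnil
  have hPiNil : Pi → (∀ x : H, ∃ n : ℕ, σ (op (a₀ ^ n)) x = 0) := by
    intro hPi
    set K : Submodule C H := LinearMap.ker (E ^ d) with hK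
    have hKstab : ∀ (a : A) (x : H), x ∈ K → σ (op a) x ∈ K := by
      intro a x hx
      rw [hK, LinearMap.mem_ker] at hx ⊢
      rw [hEcommpow, hx, map_zero]
    have hle : ∀ a : A, K ≤ K.comap (lin a) := by
      intro a x hx
      exact hKstab a x hx
    set linQ : A → ((H ⧸ K) →ₗ[C] (H ⧸ K)) :=
      fun a => Submodule.mapQ K K (lin a) (hle a) with hlinQdef
    have hlinQ : ∀ (a : A) (x : H), linQ a (K.mkQ x) = K.mkQ (σ (op a) x) := by
      intro a x
      rw [hlinQdef]
      simp only [Submodule.mkQ_apply, Submodule.mapQ_apply]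
      rfl
    set σ' : Aᵐᵒᵖ →+* AddMonoid.End (H ⧸ K) :=
      { toFun := fun p => (linQ (unop p)).toAddMonoidHom
        map_one' := by
          refine AddMonoidHom.ext fun q => ?_
          obtain ⟨x, rfl⟩ := K.mkQ_surjective q
          show linQ (unop 1) (K.mkQ x) = K.mkQ x
          rw [unop_one, hlinQ, op_one, map_one]
          rfl
        map_mul' := by
          intro p q
          refine AddMonoidHom.ext fun q' => ?_
          obtain ⟨x, rfl⟩ := K.mkQ_surjective q'
          show linQ (unop (p * q)) (K.mkQ x) = linQ (unop p) (linQ (unop q) (K.mkQ x))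
          rw [hlinQ, hlinQ, hlinQ, op_unop, op_unop, op_unop, map_mul, endMulApply]
        map_zero' := by
          refine AddMonoidHom.ext fun q => ?_
          obtain ⟨x, rfl⟩ := K.mkQ_surjective q
          show linQ (unop 0) (K.mkQ x) = 0
          rw [unop_zero, hlinQ, op_zero, map_zero]
          show K.mkQ ((0 : AddMonoid.End H) x) = 0
          rw [AddMonoid.End.zero_apply, map_zero]
        map_add' := by
          intro p q
          refine AddMonoidHom.ext fun q' => ?_
          obtain ⟨x, rfl⟩ := K.mkQ_surjective q'
          show linQ (unop (p + q)) (K.mkQ x) =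
            linQ (unop p) (K.mkQ x) + linQ (unop q) (K.mkQ x)
          rw [hlinQ, hlinQ, hlinQ, ← map_add, unop_add, op_add, map_add]
          rfl } with hσ'def
    have hσ'app : ∀ (a : A) (q : H ⧸ K), σ' (op a) q = linQ a q := by
      intro a q
      show (linQ (unop (op a))).toAddMonoidHom q = linQ a q
      rw [unop_op]
      rfl
    have hcompatQ : ∀ (a : A) (m : H),
        K.mkQ.toAddMonoidHom (σ (op a) m) = σ' (op a) (K.mkQ.toAddMonoidHom m) := by
      intro a m
      show K.mkQ (σ (op a) m) = σ' (op a) (K.mkQ m)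
      rw [hσ'app, hlinQ]
    have hker1 : LinearMap.ker (E ^ (d + 1)) = LinearMap.ker (E ^ d) :=
      Module.End.ker_pow_eq_ker_pow_finrank_of_le (by omega)
    have hkerQ : ∀ m : H, K.mkQ.toAddMonoidHom m = 0 → ∃ n : ℕ, σ (op (a₀ ^ n)) m = 0 := by
      intro m hm
      have hmK : m ∈ K := by
        rwa [← Submodule.Quotient.mk_eq_zero, ← Submodule.mkQ_apply]
      refine ⟨d, ?_⟩
      rw [← linpow]
      exact LinearMap.mem_ker.mp hmK
    -- the induced endomorphism is bijective
    have hEQinj : Function.Injective (linQ a₀) := by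
      rw [injective_iff_map_eq_zero]
      intro q hq
      obtain ⟨x, rfl⟩ := K.mkQ_surjective q
      rw [hlinQ] at hq
      have h1 : σ (op a₀) x ∈ K := by
        rwa [← Submodule.Quotient.mk_eq_zero, ← Submodule.mkQ_apply]
      have h2 : (E ^ (d + 1)) x = 0 := by
        rw [pow_succ, Module.End.mul_apply]
        exact LinearMap.mem_ker.mp h1
      have h3 : x ∈ K := by
        rw [hK]
        rw [← hker1]
        exact LinearMap.mem_ker.mpr h2
      rwa [Submodule.mkQ_apply, Submodule.Quotient.mk_eq_zero]
    have hEQsurj : Function.Surjective (linQ a₀) :=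
      LinearMap.injective_iff_surjective.mp hEQinj
    set eqv : (H ⧸ K) ≃ₗ[C] (H ⧸ K) :=
      LinearEquiv.ofBijective (linQ a₀) ⟨hEQinj, hEQsurj⟩ with heqv
    have heqvapp : ∀ q : H ⧸ K, eqv q = linQ a₀ q := fun q => rfl
    set u : (AddMonoid.End (H ⧸ K))ˣ :=
      { val := (linQ a₀).toAddMonoidHom
        inv := eqv.symm.toLinearMap.toAddMonoidHom
        val_inv := by
          refine AddMonoidHom.ext fun q => ?_
          show linQ a₀ (eqv.symm q) = q
          rw [← heqvapp]
          exact eqv.apply_symm_apply q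
        inv_val := by
          refine AddMonoidHom.ext fun q => ?_
          show eqv.symm (linQ a₀ q) = q
          rw [← heqvapp]
          exact eqv.symm_apply_apply q } with hudef
    have hu : (↑u : AddMonoid.End (H ⧸ K)) = σ' (op a₀) := by
      refine AddMonoidHom.ext fun q => ?_
      show linQ a₀ q = σ' (op a₀) q
      rw [hσ'app]
    have hπsurj : Function.Surjective K.mkQ.toAddMonoidHom := K.mkQ_surjective
    obtain ⟨τ, hloc⟩ := locExists (f : A →+* B) hinj' β hcentral a₀ ha₀' hcA hgen'
      σ σ' K.mkQ.toAddMonoidHom hπsurj hcompatQ hkerQ u hu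
    have hsub : Subsingleton (H ⧸ K) := hPi (H ⧸ K) _ τ K.mkQ.toAddMonoidHom hloc
    intro x
    refine ⟨d, ?_⟩
    have h1 : K.mkQ x = 0 := Subsingleton.elim _ _
    have h2 : x ∈ K := by
      rwa [Submodule.mkQ_apply, Submodule.Quotient.mk_eq_zero] at h1
    rw [← linpow]
    exact LinearMap.mem_ker.mp h2
  have hNilPii : (∀ x : H, ∃ n : ℕ, σ (op (a₀ ^ n)) x = 0) → Pii := by
    intro hnil N hstab hsimp σN hσN L _ τ ι hloc
    refine locTriv (f : A →+* B) β a₀ ha₀' σN τ ι hloc ?_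
    intro x
    obtain ⟨n, hn⟩ := hnil ↑x
    refine ⟨n, ?_⟩
    refine Subtype.ext ?_
    rw [hσN, hn]
    rfl
  have hNilPiii : (∀ x : H, ∃ n : ℕ, σ (op (a₀ ^ n)) x = 0) → Piii := by
    intro hnil χ hex
    obtain ⟨h0, hh0, heig⟩ := hex
    have h1 : ∀ n : ℕ, σ (op (a₀ ^ n)) h0 = χ ⟨a₀, ha₀c⟩ ^ n • h0 := by
      intro n
      induction n with
      | zero =>
        rw [pow_zero, op_one, map_one, pow_zero, one_smul]
        rfl
      | succ n ih =>
        have ha : σ (op a₀) h0 = χ ⟨a₀, ha₀c⟩ • h0 := heig ⟨a₀, ha₀c⟩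
        rw [pow_succ', op_mul, map_mul, endMulApply, ha, hCbil, ih, smul_smul, ← pow_succ']
    obtain ⟨n, hn⟩ := hnil h0
    rw [h1 n] at hn
    rcases smul_eq_zero.mp hn with hc | hc
    · rcases Nat.eq_zero_or_pos n with rfl | hp
      · rw [pow_zero] at hc
        exact absurd hc one_ne_zero
      · exact (pow_eq_zero_iff hp.ne').mp hc
    · exact absurd hc hh0
  -- key construction for the converse directions
  have key : (¬ ∀ x : H, ∃ n : ℕ, σ (op (a₀ ^ n)) x = 0) →
      ∃ (V : Submodule C H) (lam : C), lam ≠ 0 ∧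
        (∀ (a : A) (x : H), x ∈ V → σ (op a) x ∈ V) ∧ V ≠ ⊥ ∧
        (∀ N' : AddSubgroup H, (∀ (a : A) (x : H), x ∈ N' → σ (op a) x ∈ N') →
          N' ≤ V.toAddSubgroup → N' = ⊥ ∨ N' = V.toAddSubgroup) ∧
        (∀ x ∈ V, σ (op a₀) x = lam • x) := by
    intro hnot
    have hEd : ¬ (E ^ d = 0) := by
      intro h0
      apply hnot
      intro x
      refine ⟨d, ?_⟩
      rw [← linpow, ← hE, h0, LinearMap.zero_apply]
    set W : Submodule C H := LinearMap.range (E ^ d) with hW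
    have hWne : W ≠ ⊥ := by
      intro hbot
      exact hEd (LinearMap.range_eq_bot.mp hbot)
    have hker1 : LinearMap.ker (E ^ (d + 1)) = LinearMap.ker (E ^ d) :=
      Module.End.ker_pow_eq_ker_pow_finrank_of_le (by omega)
    have hswap : ∀ y : H, (E ^ d) (E y) = E ((E ^ d) y) := by
      intro y
      rw [← Module.End.mul_apply, ← Module.End.mul_apply, ← pow_succ, ← pow_succ']
    have hWmap : ∀ x ∈ W, E x ∈ W := by
      intro x hx
      obtain ⟨y, rfl⟩ := LinearMap.mem_range.mp hx
      exact LinearMap.mem_range.mpr ⟨E y, hswap y⟩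
    set Er : ↥W →ₗ[C] ↥W := E.restrict hWmap with hEr
    have hErinj : Function.Injective Er := by
      rw [injective_iff_map_eq_zero]
      intro w hw
      have h1 : E (↑w : H) = 0 := by
        have h2 := congrArg Subtype.val hw
        rw [hEr, LinearMap.restrict_coe_apply] at h2
        simpa using h2
      obtain ⟨y, hy⟩ := LinearMap.mem_range.mp w.2
      have h3 : (E ^ (d + 1)) y = 0 := by
        rw [pow_succ', Module.End.mul_apply, hy, h1]
      have h4 : y ∈ LinearMap.ker (E ^ d) := by
        rw [← hker1]
        exact LinearMap.mem_ker.mpr h3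
      have h5 : (↑w : H) = 0 := by
        rw [← hy]
        exact LinearMap.mem_ker.mp h4
      exact Subtype.ext (by simpa using h5)
    have hWnt : Nontrivial ↥W := Submodule.nontrivial_iff_ne_bot.mpr hWne
    obtain ⟨lam, hlam⟩ := Module.End.exists_eigenvalue Er
    obtain ⟨w, hw⟩ := hlam.exists_hasEigenvector
    have hwe : Er w = lam • w := hw.apply_eq_smul
    have hlamne : lam ≠ 0 := by
      intro h0
      rw [h0, zero_smul] at hwe
      exact hw.right (hErinj (hwe.trans (map_zero Er).symm))
    have hx₀ : σ (op a₀) (↑w : H) = lam • (↑w : H) := by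
      have h2 := congrArg Subtype.val hwe
      rw [hEr, LinearMap.restrict_coe_apply] at h2
      simp at h2; exact h2
    have hx₀ne : (↑w : H) ≠ 0 := by
      intro h
      exact hw.right (Subtype.ext (by simpa using h))
    set Eig : Submodule C H := Module.End.eigenspace E lam with hEig
    have hmemEig : ∀ x : H, x ∈ Eig ↔ σ (op a₀) x = lam • x := by
      intro x
      rw [hEig, Module.End.mem_eigenspace_iff]
      exact Iff.rfl
    have hEigstab : ∀ (a : A) (x : H), x ∈ Eig → σ (op a) x ∈ Eig := by
      intro a x hx
      rw [hmemEig] at hx ⊢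
      rw [hcommE, hx, hCbil]
    have hEigne : Eig ≠ ⊥ :=
      Submodule.ne_bot_iff Eig |>.mpr ⟨↑w, (hmemEig _).mpr hx₀, hx₀ne⟩
    set Pn : ℕ → Prop := fun n => ∃ V : Submodule C H,
      ((∀ (a : A) (x : H), x ∈ V → σ (op a) x ∈ V) ∧ V ≠ ⊥ ∧ V ≤ Eig) ∧
        Module.finrank C ↥V = n with hPn
    have hPne : ∃ n, Pn n := ⟨_, Eig, ⟨hEigstab, hEigne, le_rfl⟩, rfl⟩
    obtain ⟨V, ⟨hVstab, hVne, hVle⟩, hVrank⟩ := Nat.find_spec hPne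
    refine ⟨V, lam, hlamne, hVstab, hVne, ?_, fun x hx => (hmemEig x).mp (hVle hx)⟩
    intro N' hN'stab hN'le
    by_cases hbot : N' = ⊥
    · exact Or.inl hbot
    refine Or.inr ?_
    set V' : Submodule C H :=
      { carrier := (N' : Set H)
        add_mem' := fun h1 h2 => N'.add_mem h1 h2
        zero_mem' := N'.zero_mem
        smul_mem' := by
          intro c x hx
          have h1 := hN'stab (algebraMap C A c) x hx
          rwa [hCact] at h1 } with hV'
    have hmemV' : ∀ x : H, x ∈ V' ↔ x ∈ N' := fun x => Iff.rfl
    have hV'leV : V' ≤ V := by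
      intro x hx
      exact (Submodule.mem_toAddSubgroup V).mp (hN'le ((hmemV' x).mp hx))
    have hV'ne : V' ≠ ⊥ := by
      intro h
      apply hbot
      refine AddSubgroup.ext fun x => ?_
      rw [AddSubgroup.mem_bot]
      constructor
      · intro hx
        have : x ∈ V' := (hmemV' x).mpr hx
        rw [h] at this
        exact Submodule.mem_bot C |>.mp this
      · rintro rfl
        exact N'.zero_mem
    have hV'stab : ∀ (a : A) (x : H), x ∈ V' → σ (op a) x ∈ V' := by
      intro a x hx
      exact (hmemV' _).mpr (hN'stab a x ((hmemV' x).mp hx))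
    have hV'le : V' ≤ Eig := le_trans hV'leV hVle
    have hmin := Nat.find_min' hPne ⟨V', ⟨hV'stab, hV'ne, hV'le⟩, rfl⟩
    rcases lt_or_eq_of_le hV'leV with hlt | heq
    · have hfr := Submodule.finrank_lt_finrank_of_lt hlt
      rw [hVrank] at hfr
      omega
    · refine AddSubgroup.ext fun x => ?_
      rw [Submodule.mem_toAddSubgroup, ← heq]
      exact (hmemV' x).symm
  have hPiiNil : Pii → (∀ x : H, ∃ n : ℕ, σ (op (a₀ ^ n)) x = 0) := by
    intro hPii
    by_contra hnot
    obtain ⟨V, lam, hlamne, hVstab, hVne, hVmin, hVeig⟩ := key hnot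
    set N : AddSubgroup H := V.toAddSubgroup with hNdef
    have hmemN : ∀ x : H, x ∈ N ↔ x ∈ V := fun x => Submodule.mem_toAddSubgroup V
    have hstabN : ∀ (a : A) (x : H), x ∈ N → σ (op a) x ∈ N := by
      intro a x hx
      exact (hmemN _).mpr (hVstab a x ((hmemN x).mp hx))
    have hNne : N ≠ ⊥ := by
      intro h
      apply hVne
      rw [Submodule.eq_bot_iff]
      intro x hx
      have h1 : x ∈ N := (hmemN x).mpr hx
      rw [h] at h1
      exact AddSubgroup.mem_bot.mp h1
    have hmemσ : ∀ (p : Aᵐᵒᵖ) (x : ↥N), σ p ↑x ∈ N := by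
      intro p x
      have h1 := hstabN (unop p) ↑x x.2
      rwa [op_unop] at h1
    set σN : Aᵐᵒᵖ →+* AddMonoid.End ↥N :=
      { toFun := fun p =>
          { toFun := fun x => ⟨σ p ↑x, hmemσ p x⟩
            map_zero' := Subtype.ext (by simp)
            map_add' := fun x y => Subtype.ext (by simp) }
        map_one' := AddMonoidHom.ext fun x => Subtype.ext (by
          show σ (1 : Aᵐᵒᵖ) ↑x = (↑x : H)
          rw [map_one]
          rfl)
        map_mul' := fun p q => AddMonoidHom.ext fun x => Subtype.ext (by
          show σ (p * q) ↑x = σ p (σ q ↑x)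
          rw [map_mul]
          rfl)
        map_zero' := AddMonoidHom.ext fun x => Subtype.ext (by
          show σ (0 : Aᵐᵒᵖ) ↑x = (0 : H)
          rw [map_zero]
          rfl)
        map_add' := fun p q => AddMonoidHom.ext fun x => Subtype.ext (by
          show σ (p + q) ↑x = σ p ↑x + σ q ↑x
          rw [map_add]
          rfl) } with hσNdef
    have hσNc : ∀ (a : A) (x : ↥N), ((σN (op a) x : ↥N) : H) = σ (op a) ↑x := fun a x => rfl
    have hsmulmem : ∀ (c : C) (x : H), x ∈ N → c • x ∈ N := by
      intro c x hx
      have h1 := hstabN (algebraMap C A c) x hx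
      rwa [hCact] at h1
    have heigN : ∀ x : ↥N, σ (op a₀) (↑x : H) = lam • ↑x :=
      fun x => hVeig ↑x ((hmemN _).mp x.2)
    set uinv : AddMonoid.End ↥N :=
      { toFun := fun x => ⟨lam⁻¹ • ↑x, hsmulmem _ _ x.2⟩
        map_zero' := Subtype.ext (by simp)
        map_add' := fun x y => Subtype.ext (by simp [smul_add]) } with huinvdef
    set u : (AddMonoid.End ↥N)ˣ :=
      { val := σN (op a₀)
        inv := uinv
        val_inv := AddMonoidHom.ext fun x => Subtype.ext (by
          show σ (op a₀) (lam⁻¹ • (↑x : H)) = ↑x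
          rw [hCbil, heigN x, smul_smul, inv_mul_cancel₀ hlamne, one_smul])
        inv_val := AddMonoidHom.ext fun x => Subtype.ext (by
          show lam⁻¹ • (σ (op a₀) (↑x : H)) = ↑x
          rw [heigN x, smul_smul, inv_mul_cancel₀ hlamne, one_smul]) } with hudef
    obtain ⟨τ, hloc⟩ := locExists (f : A →+* B) hinj' β hcentral a₀ ha₀' hcA hgen'
      σN σN (AddMonoidHom.id ↥N) (fun x => ⟨x, rfl⟩)
      (fun a m => rfl) (fun m hm => ⟨0, by simpa using hm⟩) u rfl
    have hsub : Subsingleton ↥N :=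
      hPii N hstabN ⟨hNne, hVmin⟩ σN hσNc ↥N _ τ (AddMonoidHom.id ↥N) hloc
    obtain ⟨x, hxV, hx0⟩ := (Submodule.ne_bot_iff V).mp hVne
    have h1 : (⟨x, (hmemN x).mpr hxV⟩ : ↥N) = 0 := Subsingleton.elim _ _
    exact hx0 (by simpa using congrArg Subtype.val h1)
  have hPiiiNil : Piii → (∀ x : H, ∃ n : ℕ, σ (op (a₀ ^ n)) x = 0) := by
    intro hPiii
    by_contra hnot
    obtain ⟨V, lam, hlamne, hVstab, hVne, hVmin, hVeig⟩ := key hnot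
    obtain ⟨h₀, hh₀V, hh₀ne⟩ := (Submodule.ne_bot_iff V).mp hVne
    have schur : ∀ z : A, (∀ g : A, g * z = z * g) →
        ∃ c : C, ∀ x ∈ V, σ (op z) x = c • x := by
      intro z hz
      have hVz : ∀ x ∈ V, lin z x ∈ V := fun x hx => hVstab z x hx
      set Lz : ↥V →ₗ[C] ↥V := (lin z).restrict hVz with hLz
      have hVnt : Nontrivial ↥V := Submodule.nontrivial_iff_ne_bot.mpr hVne
      obtain ⟨c, hc⟩ := Module.End.exists_eigenvalue Lz
      obtain ⟨v, hv⟩ := hc.exists_hasEigenvector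
      have hveq : σ (op z) (↑v : H) = c • ↑v := by
        have h2 := congrArg Subtype.val hv.apply_eq_smul
        rw [hLz, LinearMap.restrict_coe_apply] at h2
        simp at h2; exact h2
      have hvne : (↑v : H) ≠ 0 := fun h => hv.right (Subtype.ext (by simpa using h))
      set G : AddSubgroup H :=
        { carrier := {x | x ∈ V ∧ σ (op z) x = c • x}
          zero_mem' := ⟨V.zero_mem, by simp⟩
          add_mem' := by
            rintro x y ⟨hxV, hx⟩ ⟨hyV, hy⟩
            exact ⟨V.add_mem hxV hyV, by rw [map_add, hx, hy, smul_add]⟩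
          neg_mem' := by
            rintro x ⟨hxV, hx⟩
            exact ⟨V.neg_mem hxV, by rw [map_neg, hx, smul_neg]⟩ } with hGdef
      have hmemG : ∀ x : H, x ∈ G ↔ (x ∈ V ∧ σ (op z) x = c • x) := fun x => Iff.rfl
      have hGstab : ∀ (a : A) (x : H), x ∈ G → σ (op a) x ∈ G := by
        intro a x hx
        obtain ⟨hxV, hxe⟩ := (hmemG x).mp hx
        refine (hmemG _).mpr ⟨hVstab a x hxV, ?_⟩
        have hcz : σ (op z) (σ (op a) x) = σ (op a) (σ (op z) x) := by
          rw [← endMulApply, ← endMulApply, ← map_mul, ← map_mul, ← op_mul, ← op_mul, hz a]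
        rw [hcz, hxe, hCbil]
      have hGle : G ≤ V.toAddSubgroup :=
        fun x hx => (Submodule.mem_toAddSubgroup V).mpr ((hmemG x).mp hx).1
      have hGne : G ≠ ⊥ := by
        intro h
        have h1 : (↑v : H) ∈ G := (hmemG _).mpr ⟨v.2, hveq⟩
        rw [h, AddSubgroup.mem_bot] at h1
        exact hvne h1
      rcases hVmin G hGstab hGle with h | h
      · exact absurd h hGne
      · refine ⟨c, fun x hx => ?_⟩
        have h1 : x ∈ G := by
          rw [h]
          exact (Submodule.mem_toAddSubgroup V).mpr hx
        exact ((hmemG x).mp h1).2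
    have hcenter : ∀ z : ↥(Subalgebra.center C A), ∀ g : A, g * ↑z = ↑z * g :=
      fun z g => Subalgebra.mem_center_iff.mp z.2 g
    set χ0 : ↥(Subalgebra.center C A) → C := fun z => (schur ↑z (hcenter z)).choose with hχ0
    have hχ0spec : ∀ (z : ↥(Subalgebra.center C A)) (x : H), x ∈ V →
        σ (op ↑z) x = χ0 z • x :=
      fun z x hx => (schur ↑z (hcenter z)).choose_spec x hx
    have huniq : ∀ (z : ↥(Subalgebra.center C A)) (c : C),
        σ (op ↑z) h₀ = c • h₀ → χ0 z = c := by
      intro z c hc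
      have h1 : χ0 z • h₀ = c • h₀ := by rw [← hχ0spec z h₀ hh₀V, hc]
      have h2 : (χ0 z - c) • h₀ = 0 := by rw [sub_smul, h1, sub_self]
      rcases smul_eq_zero.mp h2 with h | h
      · exact sub_eq_zero.mp h
      · exact absurd h hh₀ne
    set χ : ↥(Subalgebra.center C A) →ₐ[C] C :=
      { toFun := χ0
        map_one' := huniq 1 1 (by
          show σ (op ((1 : ↥(Subalgebra.center C A)) : A)) h₀ = (1 : C) • h₀
          rw [OneMemClass.coe_one, op_one, map_one, one_smul]
          rfl)
        map_mul' := fun z w => huniq (z * w) (χ0 z * χ0 w) (by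
          show σ (op ((↑z * ↑w : A))) h₀ = (χ0 z * χ0 w) • h₀
          rw [op_mul, map_mul, endMulApply, hχ0spec z h₀ hh₀V, hCbil,
            hχ0spec w h₀ hh₀V, smul_smul])
        map_zero' := huniq 0 0 (by
          show σ (op ((0 : ↥(Subalgebra.center C A)) : A)) h₀ = (0 : C) • h₀
          rw [ZeroMemClass.coe_zero, op_zero, map_zero, zero_smul]
          rfl)
        map_add' := fun z w => huniq (z + w) (χ0 z + χ0 w) (by
          show σ (op ((↑z + ↑w : A))) h₀ = (χ0 z + χ0 w) • h₀
          rw [op_add, map_add]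
          show σ (op ↑z) h₀ + σ (op ↑w) h₀ = _
          rw [hχ0spec z h₀ hh₀V,
            hχ0spec w h₀ hh₀V, ← add_smul])
        commutes' := fun c => by
          show χ0 (algebraMap C ↥(Subalgebra.center C A) c) = algebraMap C C c
          rw [Algebra.algebraMap_self_apply]
          refine huniq _ c ?_
          show σ (op ((algebraMap C ↥(Subalgebra.center C A) c : ↥(Subalgebra.center C A)) : A)) h₀ = c • h₀
          rw [Subalgebra.coe_algebraMap]
          exact hCact c h₀ } with hχdef
    have hχeig : ∃ h : H, h ≠ 0 ∧ ∀ z : ↥(Subalgebra.center C A), σ (op ↑z) h = χ z • h :=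
      ⟨h₀, hh₀ne, fun z => by exact hχ0spec z h₀ hh₀V⟩
    have hz0 := hPiii χ hχeig
    have hval : χ ⟨a₀, ha₀c⟩ = lam := huniq ⟨a₀, ha₀c⟩ lam (hVeig h₀ hh₀V)
    rw [hval] at hz0
    exact hlamne hz0
  exact ⟨⟨fun h => hNilPii (hPiNil h), fun h => hNilPi (hPiiNil h)⟩,
    ⟨fun h => hNilPiii (hPiNil h), fun h => hNilPi (hPiiiNil h)⟩⟩
end
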